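/- arXiv:0707.3229 — 10 statements merged into one kernel-verified Lean document; each statement's English description precedes it below -/
import Mathlib

section
/- Let A be a unital normed algebra and let L be a strongly Leibniz seminorm on A. Set A^f = {a ∈ A : L(a) < ∞}. Then A^f is a unital subalgebra of A, and for any a ∈ A^f, a is invertible in A^f if and only if a is invertible in A; consequently, for every a ∈ A^f the spectrum of a relative to A^f equals the spectrum of a relative to A (A^f is a spectrally stable subalgebra of A). -/
open scoped ENNReal

/-- A `[0,∞]`-valued seminorm on a normed algebra. -/
def IsESeminorm {A : Type*} [NormedRing A] [NormedAlgebra ℂ A] (L : A → ℝ≥0∞) : Prop :=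
  L 0 = 0 ∧ (∀ t : ℂ, t ≠ 0 → ∀ a : A, L (t • a) = (‖t‖₊ : ℝ≥0∞) * L a) ∧
    ∀ a b : A, L (a + b) ≤ L a + L b

/-- The Leibniz property. -/
def IsLeibniz {A : Type*} [NormedRing A] [NormedAlgebra ℂ A] (L : A → ℝ≥0∞) : Prop :=
  ∀ a b : A, L (a * b) ≤ L a * (‖b‖₊ : ℝ≥0∞) + (‖a‖₊ : ℝ≥0∞) * L b

/-- The strong Leibniz property. -/
def IsStronglyLeibniz {A : Type*} [NormedRing A] [NormedAlgebra ℂ A] (L : A → ℝ≥0∞) : Prop :=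
  IsLeibniz L ∧ L 1 = 0 ∧
    ∀ u : Aˣ, L ((u⁻¹ : Aˣ) : A) ≤ ((‖((u⁻¹ : Aˣ) : A)‖₊ : ℝ≥0∞)) ^ 2 * L (u : A)

/-- If `L` is a strongly Leibniz seminorm on a unital normed algebra `A`, then
`A^f = {a : L(a) < ∞}` is a unital subalgebra of `A`, an element of `A^f` is invertible in `A^f`
iff it is invertible in `A`, and the spectrum of any element of `A^f` relative to `A^f` equals
its spectrum relative to `A`. -/
theorem finite_part_spectrally_stable {A : Type*} [NormedRing A] [NormOneClass A]
    [NormedAlgebra ℂ A] (L : A → ℝ≥0∞) (hsem : IsESeminorm L) (hsl : IsStronglyLeibniz L) :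
    ∃ S : Subalgebra ℂ A, (∀ a : A, a ∈ S ↔ L a < ⊤) ∧
      (∀ a : S, IsUnit a ↔ IsUnit (a : A)) ∧
      (∀ a : S, spectrum ℂ a = spectrum ℂ (a : A)) := by
  obtain ⟨hzero, hsmul, hadd⟩ := hsem
  obtain ⟨hleib, hone, hinv⟩ := hsl
  set S : Subalgebra ℂ A :=
    { carrier := {a | L a < ⊤}
      mul_mem' := by
        intro a b ha hb
        exact lt_of_le_of_lt (hleib a b)
          (ENNReal.add_lt_top.2 ⟨ENNReal.mul_lt_top ha ENNReal.coe_lt_top,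
            ENNReal.mul_lt_top ENNReal.coe_lt_top hb⟩)
      one_mem' := by
        show L 1 < ⊤
        rw [hone]; exact ENNReal.zero_lt_top
      add_mem' := by
        intro a b ha hb
        exact lt_of_le_of_lt (hadd a b) (ENNReal.add_lt_top.2 ⟨ha, hb⟩)
      zero_mem' := by
        show L 0 < ⊤
        rw [hzero]; exact ENNReal.zero_lt_top
      algebraMap_mem' := by
        intro t
        show L (algebraMap ℂ A t) < ⊤
        rcases eq_or_ne t 0 with rfl | ht
        · rw [map_zero, hzero]; exact ENNReal.zero_lt_top
        · rw [Algebra.algebraMap_eq_smul_one t, hsmul t ht 1, hone, mul_zero]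
          exact ENNReal.zero_lt_top } with hSdef
  have key : ∀ b : S, IsUnit b ↔ IsUnit (b : A) := by
    intro b
    constructor
    · intro hb
      exact hb.map (Subalgebra.val _)
    · intro hb
      obtain ⟨u, hu⟩ := hb
      have hinvmem : ((u⁻¹ : Aˣ) : A) ∈ S := by
        show L ((u⁻¹ : Aˣ) : A) < ⊤
        refine lt_of_le_of_lt (hinv u) (ENNReal.mul_lt_top ?_ ?_)
        · exact ENNReal.pow_lt_top ENNReal.coe_lt_top
        · rw [hu]; exact b.2
      refine ⟨⟨b, ⟨((u⁻¹ : Aˣ) : A), hinvmem⟩, ?_, ?_⟩, rfl⟩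
      · ext; simp [← hu]
      · ext; simp [← hu]
  refine ⟨S, fun a => Iff.rfl, key, ?_⟩
  intro a
  ext z
  rw [spectrum.mem_iff, spectrum.mem_iff, not_iff_not]
  have hcoe : ((algebraMap ℂ S z - a : S) : A) = algebraMap ℂ A z - (a : A) := by
    push_cast
    rfl
  rw [← hcoe]
  exact key _
end

section
/- Let A be a unital normed algebra and let α be an isometric algebra automorphism of A. Define L(a) = ‖α(a) − a‖. Then: (i) L is a strongly Leibniz seminorm on A, i.e. L(1) = 0, L(ab) ≤ L(a)‖b‖ + ‖a‖L(b) for all a, b ∈ A, and L(a⁻¹) ≤ ‖a⁻¹‖²·L(a) for every invertible a ∈ A; (ii) if π denotes the left regular representation of A on itself (π(a)b = ab) and operators on A are given the operator norm, then ‖α∘π(a) − π(a)∘α‖ = ‖α(a) − a‖ for every a ∈ A. -/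
/-- For an isometric algebra automorphism `α` of a unital normed algebra `A`, the seminorm
`L(a) = ‖α(a) − a‖` is strongly Leibniz, and moreover for the left regular representation `π`
the operator norm of `α ∘ π(a) − π(a) ∘ α` equals `‖α(a) − a‖`. -/
theorem stronglyLeibniz_of_isometric_automorphism {A : Type*} [NormedRing A] [NormOneClass A]
    [NormedAlgebra ℂ A]
    (α : A ≃ₐ[ℂ] A) (hiso : ∀ a : A, ‖α a‖ = ‖a‖)
    (L : A → ℝ) (hL : ∀ a, L a = ‖α a - a‖) :
    (L 1 = 0 ∧
     (∀ a b : A, L (a * b) ≤ L a * ‖b‖ + ‖a‖ * L b) ∧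
     (∀ u : Aˣ, L ((u⁻¹ : Aˣ) : A) ≤ ‖((u⁻¹ : Aˣ) : A)‖ ^ 2 * L (u : A))) ∧
    (∀ a : A, ∃ T : A →L[ℂ] A, (∀ b : A, T b = α (a * b) - a * α b) ∧ ‖T‖ = ‖α a - a‖) := by
  refine ⟨⟨?_, ?_, ?_⟩, ?_⟩
  · simp [hL]
  · intro a b
    have key : α (a * b) - a * b = (α a - a) * α b + a * (α b - b) := by
      rw [map_mul]; noncomm_ring
    rw [hL, hL, hL, key]
    calc ‖(α a - a) * α b + a * (α b - b)‖
        ≤ ‖(α a - a) * α b‖ + ‖a * (α b - b)‖ := norm_add_le _ _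
      _ ≤ ‖α a - a‖ * ‖α b‖ + ‖a‖ * ‖α b - b‖ := by
          gcongr <;> exact norm_mul_le _ _
      _ = ‖α a - a‖ * ‖b‖ + ‖a‖ * ‖α b - b‖ := by rw [hiso]
  · intro u
    have key : α ((u⁻¹ : Aˣ) : A) - ((u⁻¹ : Aˣ) : A)
        = α ((u⁻¹ : Aˣ) : A) * ((u : A) - α (u : A)) * ((u⁻¹ : Aˣ) : A) := by
      have h1 : α ((u⁻¹ : Aˣ) : A) * α (u : A) = 1 := by
        rw [← map_mul]; simp
      rw [mul_sub, sub_mul, h1, one_mul]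
      congr 1
      rw [mul_assoc]
      simp
    rw [hL, hL, key]
    calc ‖α ((u⁻¹ : Aˣ) : A) * ((u : A) - α (u : A)) * ((u⁻¹ : Aˣ) : A)‖
        ≤ ‖α ((u⁻¹ : Aˣ) : A) * ((u : A) - α (u : A))‖ * ‖((u⁻¹ : Aˣ) : A)‖ := norm_mul_le _ _
      _ ≤ ‖α ((u⁻¹ : Aˣ) : A)‖ * ‖(u : A) - α (u : A)‖ * ‖((u⁻¹ : Aˣ) : A)‖ := by
          gcongr; exact norm_mul_le _ _
      _ = ‖((u⁻¹ : Aˣ) : A)‖ ^ 2 * ‖α (u : A) - (u : A)‖ := by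
          rw [hiso, norm_sub_rev]; ring
  · intro a
    set c := α a - a with hc
    have hkey : ∀ b : A, c * α b = α (a * b) - a * α b := by
      intro b; rw [hc, sub_mul, map_mul]
    let f : A →ₗ[ℂ] A := (LinearMap.mulLeft ℂ c).comp α.toLinearMap
    have hf : ∀ b, f b = c * α b := fun b => rfl
    have hbound : ∀ b : A, ‖f b‖ ≤ ‖c‖ * ‖b‖ := by
      intro b
      calc ‖c * α b‖ ≤ ‖c‖ * ‖α b‖ := norm_mul_le _ _
        _ = ‖c‖ * ‖b‖ := by rw [hiso]
    refine ⟨f.mkContinuous ‖c‖ hbound, fun b => hkey b, ?_⟩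
    apply le_antisymm
    · exact LinearMap.mkContinuous_norm_le _ (norm_nonneg c) _
    · have h1 : (f.mkContinuous ‖c‖ hbound) 1 = c := by
        show f 1 = c; rw [hf]; simp
      calc ‖c‖ = ‖(f.mkContinuous ‖c‖ hbound) 1‖ := by rw [h1]
        _ ≤ ‖f.mkContinuous ‖c‖ hbound‖ * ‖(1 : A)‖ :=
            (f.mkContinuous ‖c‖ hbound).le_opNorm 1
        _ = ‖f.mkContinuous ‖c‖ hbound‖ := by rw [norm_one, mul_one]
end

section
/- Let G be a group, let A be a unital normed algebra, let α be an action of G on A by isometric algebra automorphisms, and let ℓ be a length function on G. Define L on A by L(a) = sup{‖α_x(a) − a‖/ℓ(x) : x ∈ G, x ≠ e}, with values in [0,∞]. Then L is a lower semicontinuous strongly Leibniz seminorm on A. -/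
open scoped ENNReal

/-- Given an action `α` of a group `G` on a unital normed algebra `A` by isometric algebra
automorphisms, and a length function `ℓ` on `G`, the seminorm
`L(a) = sup {‖α_x(a) − a‖ / ℓ(x) : x ≠ e}` is a lower semicontinuous strongly Leibniz
seminorm on `A`. -/
theorem stronglyLeibniz_of_action {G : Type*} [Group G]
    {A : Type*} [NormedRing A] [NormOneClass A] [NormedAlgebra ℂ A]
    (α : G → A ≃ₐ[ℂ] A)
    (hmul : ∀ x y : G, ∀ a : A, α (x * y) a = α x (α y a))
    (hone : ∀ a : A, α 1 a = a)
    (hiso : ∀ (x : G) (a : A), ‖α x a‖ = ‖a‖)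
    (ℓ : G → ℝ)
    (hℓnonneg : ∀ x, 0 ≤ ℓ x)
    (hℓzero : ∀ x, ℓ x = 0 ↔ x = 1)
    (hℓinv : ∀ x, ℓ x⁻¹ = ℓ x)
    (hℓsub : ∀ x y, ℓ (x * y) ≤ ℓ x + ℓ y)
    (L : A → ℝ≥0∞)
    (hL : ∀ a, L a = ⨆ x : {x : G // x ≠ 1}, ENNReal.ofReal (‖α (x : G) a - a‖ / ℓ (x : G))) :
    IsESeminorm L ∧ IsStronglyLeibniz L ∧ IsClosed {a : A | L a ≤ 1} := by
  have hcont : ∀ x : G, Continuous fun a : A => α x a := fun x =>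
    (AddMonoidHomClass.isometry_of_norm (α x) (hiso x)).continuous
  refine ⟨⟨?_, ?_, ?_⟩, ⟨?_, ?_, ?_⟩, ?_⟩
  · simp [hL]
  · intro t ht a
    rw [hL, hL, ENNReal.mul_iSup]
    refine iSup_congr fun x => ?_
    have h1 : α (x : G) (t • a) - t • a = t • (α (x : G) a - a) := by
      rw [map_smul, smul_sub]
    rw [h1, norm_smul, mul_div_assoc, ENNReal.ofReal_mul (norm_nonneg t),
      ofReal_norm, enorm_eq_nnnorm]
  · intro a b
    rw [hL, hL, hL]
    refine iSup_le fun x => ?_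
    have h1 : α (x : G) (a + b) - (a + b) = (α (x : G) a - a) + (α (x : G) b - b) := by
      rw [map_add]; abel
    calc ENNReal.ofReal (‖α (x : G) (a + b) - (a + b)‖ / ℓ (x : G))
        ≤ ENNReal.ofReal ((‖α (x : G) a - a‖ + ‖α (x : G) b - b‖) / ℓ (x : G)) := by
          refine ENNReal.ofReal_le_ofReal ?_
          gcongr
          · exact hℓnonneg _
          · rw [h1]; exact norm_add_le _ _
      _ ≤ ENNReal.ofReal (‖α (x : G) a - a‖ / ℓ (x : G)) +
            ENNReal.ofReal (‖α (x : G) b - b‖ / ℓ (x : G)) := by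
          rw [add_div]; exact ENNReal.ofReal_add_le
      _ ≤ _ := add_le_add (le_iSup_of_le x le_rfl) (le_iSup_of_le x le_rfl)
  · -- Leibniz
    intro a b
    rw [hL, hL, hL]
    refine iSup_le fun x => ?_
    have h1 : α (x : G) (a * b) - a * b
        = (α (x : G) a - a) * α (x : G) b + a * (α (x : G) b - b) := by
      rw [map_mul]; noncomm_ring
    have h2 : ‖α (x : G) (a * b) - a * b‖
        ≤ ‖α (x : G) a - a‖ * ‖b‖ + ‖a‖ * ‖α (x : G) b - b‖ := by
      rw [h1]
      refine (norm_add_le _ _).trans (add_le_add ?_ (norm_mul_le _ _))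
      calc ‖(α (x : G) a - a) * α (x : G) b‖ ≤ ‖α (x : G) a - a‖ * ‖α (x : G) b‖ :=
            norm_mul_le _ _
        _ = ‖α (x : G) a - a‖ * ‖b‖ := by rw [hiso]
    calc ENNReal.ofReal (‖α (x : G) (a * b) - a * b‖ / ℓ (x : G))
        ≤ ENNReal.ofReal ((‖α (x : G) a - a‖ * ‖b‖ + ‖a‖ * ‖α (x : G) b - b‖) / ℓ (x : G)) := by
          refine ENNReal.ofReal_le_ofReal ?_
          gcongr
          exact hℓnonneg _
      _ ≤ ENNReal.ofReal ((‖α (x : G) a - a‖ / ℓ (x : G)) * ‖b‖) +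
            ENNReal.ofReal (‖a‖ * (‖α (x : G) b - b‖ / ℓ (x : G))) := by
          rw [add_div]
          refine ENNReal.ofReal_add_le.trans (add_le_add ?_ ?_) <;>
            refine ENNReal.ofReal_le_ofReal (le_of_eq ?_)
          · rw [div_mul_eq_mul_div]
          · rw [mul_div_assoc]
      _ = ENNReal.ofReal (‖α (x : G) a - a‖ / ℓ (x : G)) * (‖b‖₊ : ℝ≥0∞) +
            (‖a‖₊ : ℝ≥0∞) * ENNReal.ofReal (‖α (x : G) b - b‖ / ℓ (x : G)) := by
          rw [ENNReal.ofReal_mul (div_nonneg (norm_nonneg _) (hℓnonneg _)),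
            ENNReal.ofReal_mul (norm_nonneg a), ofReal_norm, enorm_eq_nnnorm,
            ofReal_norm, enorm_eq_nnnorm]
      _ ≤ _ := by gcongr <;> exact le_iSup_of_le x le_rfl
  · simp [hL]
  · -- strongly Leibniz inverse bound
    intro u
    rw [hL, hL, ENNReal.mul_iSup]
    refine iSup_le fun x => le_iSup_of_le x ?_
    have h1 : α (x : G) ((u : A)) * α (x : G) ((u⁻¹ : Aˣ) : A) = 1 := by
      rw [← map_mul, Units.mul_inv, map_one]
    have hid : α (x : G) ((u⁻¹ : Aˣ) : A) - ((u⁻¹ : Aˣ) : A)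
        = ((u⁻¹ : Aˣ) : A) * ((u : A) - α (x : G) (u : A)) * α (x : G) ((u⁻¹ : Aˣ) : A) := by
      rw [mul_sub, Units.inv_mul, sub_mul, one_mul, mul_assoc, h1, mul_one]
    have h2 : ‖α (x : G) ((u⁻¹ : Aˣ) : A) - ((u⁻¹ : Aˣ) : A)‖
        ≤ ‖((u⁻¹ : Aˣ) : A)‖ ^ 2 * ‖α (x : G) (u : A) - (u : A)‖ := by
      rw [hid]
      calc ‖((u⁻¹ : Aˣ) : A) * ((u : A) - α (x : G) (u : A)) * α (x : G) ((u⁻¹ : Aˣ) : A)‖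
          ≤ ‖((u⁻¹ : Aˣ) : A) * ((u : A) - α (x : G) (u : A))‖ * ‖α (x : G) ((u⁻¹ : Aˣ) : A)‖ :=
            norm_mul_le _ _
        _ ≤ ‖((u⁻¹ : Aˣ) : A)‖ * ‖(u : A) - α (x : G) (u : A)‖ * ‖α (x : G) ((u⁻¹ : Aˣ) : A)‖ := by
            gcongr; exact norm_mul_le _ _
        _ = ‖((u⁻¹ : Aˣ) : A)‖ ^ 2 * ‖α (x : G) (u : A) - (u : A)‖ := by
            rw [hiso, norm_sub_rev]; ring
    calc ENNReal.ofReal (‖α (x : G) ((u⁻¹ : Aˣ) : A) - ((u⁻¹ : Aˣ) : A)‖ / ℓ (x : G))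
        ≤ ENNReal.ofReal ((‖((u⁻¹ : Aˣ) : A)‖ ^ 2 * ‖α (x : G) (u : A) - (u : A)‖) / ℓ (x : G))
          := by
          refine ENNReal.ofReal_le_ofReal ?_
          gcongr
          exact hℓnonneg _
      _ = ((‖((u⁻¹ : Aˣ) : A)‖₊ : ℝ≥0∞)) ^ 2 *
            ENNReal.ofReal (‖α (x : G) (u : A) - (u : A)‖ / ℓ (x : G)) := by
          rw [mul_div_assoc, ENNReal.ofReal_mul (by positivity), ENNReal.ofReal_pow
            (norm_nonneg _), ofReal_norm, enorm_eq_nnnorm]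
  · -- lower semicontinuity
    have hset : {a : A | L a ≤ 1}
        = ⋂ x : {x : G // x ≠ 1}, {a : A | ‖α (x : G) a - a‖ / ℓ (x : G) ≤ 1} := by
      ext a
      simp [hL, iSup_le_iff, ENNReal.ofReal_le_one]
    rw [hset]
    refine isClosed_iInter fun x => isClosed_le ?_ continuous_const
    exact (((hcont (x : G)).sub continuous_id).norm).div_const _
end

section
/- Let A be a unital normed algebra with completion Ā, and let L be a Leibniz seminorm on A. Let L̄ be the closure of L on Ā, i.e. the Minkowski functional L̄(c) = inf{r > 0 : c ∈ r·K̄} (with inf ∅ = ∞), where K̄ is the closure in Ā of {a ∈ A : L(a) ≤ 1}. Then L̄ is a Leibniz seminorm on Ā: L̄(cd) ≤ L̄(c)‖d‖ + ‖c‖L̄(d) for all c, d ∈ Ā. -/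
open scoped ENNReal

open Filter Topology

/-- If `L a ≤ 1` and `L b ≤ 1`, then `(‖a‖+‖b‖)⁻¹ • (a*b)` is in the unit ball of `L`. -/
lemma aux_unit_ball {A : Type*} [NormedRing A] [NormedAlgebra ℂ A]
    (L : A → ℝ≥0∞) (hsem : IsESeminorm L) (hleib : IsLeibniz L)
    {a b : A} (ha : L a ≤ 1) (hb : L b ≤ 1) (hx : 0 < ‖a‖ + ‖b‖) :
    L ((((‖a‖ + ‖b‖)⁻¹ : ℝ) : ℂ) • (a * b)) ≤ 1 := by
  set x : ℝ := ‖a‖ + ‖b‖ with hxdef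
  have hx0 : x ≠ 0 := ne_of_gt hx
  have ht : (((x⁻¹ : ℝ) : ℂ)) ≠ 0 := by
    simpa using inv_ne_zero hx0
  rw [hsem.2.1 _ ht]
  have hnn : (‖(((x⁻¹ : ℝ) : ℂ))‖₊ : ℝ≥0∞) = ENNReal.ofReal x⁻¹ := by
    rw [Complex.nnnorm_real, ← enorm_eq_nnnorm, Real.enorm_eq_ofReal (by positivity)]
  have hab : L (a * b) ≤ ENNReal.ofReal x := by
    calc L (a * b) ≤ L a * (‖b‖₊ : ℝ≥0∞) + (‖a‖₊ : ℝ≥0∞) * L b := hleib a b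
    _ ≤ 1 * (‖b‖₊ : ℝ≥0∞) + (‖a‖₊ : ℝ≥0∞) * 1 :=
        add_le_add (mul_le_mul_left ha _) (mul_le_mul_right hb _)
    _ = (‖a‖₊ : ℝ≥0∞) + (‖b‖₊ : ℝ≥0∞) := by rw [one_mul, mul_one, add_comm]
    _ = ENNReal.ofReal x := by
        rw [hxdef, ENNReal.ofReal_add (norm_nonneg _) (norm_nonneg _),
          ofReal_norm, ofReal_norm, enorm_eq_nnnorm, enorm_eq_nnnorm]
  calc (‖(((x⁻¹ : ℝ) : ℂ))‖₊ : ℝ≥0∞) * L (a * b) ≤ ENNReal.ofReal x⁻¹ * ENNReal.ofReal x := by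
        rw [hnn]; exact mul_le_mul_right hab _
  _ = 1 := by
        rw [← ENNReal.ofReal_mul (by positivity), inv_mul_cancel₀ hx0, ENNReal.ofReal_one]

/-- The key closure property: the closed unit ball `K̄` satisfies
`k * k' ∈ (‖k‖+‖k'‖) • K̄`. -/
lemma aux_mem_closure {A : Type*} [NormedRing A] [NormedAlgebra ℂ A]
    {Abar : Type*} [NormedRing Abar] [NormedAlgebra ℂ Abar]
    (ι : A →ₐ[ℂ] Abar) (hisometric : ∀ a : A, ‖ι a‖ = ‖a‖)
    (L : A → ℝ≥0∞) (hsem : IsESeminorm L) (hleib : IsLeibniz L)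
    {k k' : Abar} (hk : k ∈ closure (ι '' {a : A | L a ≤ 1}))
    (hk' : k' ∈ closure (ι '' {a : A | L a ≤ 1}))
    (hm : 0 < ‖k‖ + ‖k'‖) :
    ((((‖k‖ + ‖k'‖)⁻¹ : ℝ) : ℂ)) • (k * k') ∈ closure (ι '' {a : A | L a ≤ 1}) := by
  obtain ⟨u, hu, hulim⟩ := mem_closure_iff_seq_limit.mp hk
  obtain ⟨v, hv, hvlim⟩ := mem_closure_iff_seq_limit.mp hk'
  choose a haL hau using hu
  choose b hbL hbv using hv
  -- the approximating sequence
  set g : ℕ → A := fun n => (((‖a n‖ + ‖b n‖)⁻¹ : ℝ) : ℂ) • (a n * b n) with hg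
  have hnorm_a : ∀ n, ‖a n‖ = ‖u n‖ := fun n => by rw [← hau n, hisometric]
  have hnorm_b : ∀ n, ‖b n‖ = ‖v n‖ := fun n => by rw [← hbv n, hisometric]
  have hιg : ∀ n, ι (g n) = (((‖u n‖ + ‖v n‖)⁻¹ : ℝ) : ℂ) • (u n * v n) := by
    intro n
    rw [hg]
    simp only [map_smul, map_mul, hau, hbv, hnorm_a, hnorm_b]
  -- limits of the norms
  have hmn : Tendsto (fun n => ‖u n‖ + ‖v n‖) atTop (𝓝 (‖k‖ + ‖k'‖)) :=
    ((hulim.norm).add (hvlim.norm))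
  have hlim : Tendsto (fun n => ι (g n)) atTop
      (𝓝 (((((‖k‖ + ‖k'‖)⁻¹ : ℝ) : ℂ)) • (k * k'))) := by
    simp only [hιg]
    exact ((Complex.continuous_ofReal.tendsto _).comp (hmn.inv₀ hm.ne')).smul
      (hulim.mul hvlim)
  refine mem_closure_of_tendsto hlim ?_
  have hev : ∀ᶠ n in atTop, 0 < ‖u n‖ + ‖v n‖ :=
    hmn.eventually (eventually_gt_nhds hm)
  filter_upwards [hev] with n hn
  refine ⟨g n, ?_, rfl⟩
  have : 0 < ‖a n‖ + ‖b n‖ := by rw [hnorm_a, hnorm_b]; exact hn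
  exact aux_unit_ball L hsem hleib (haL n) (hbL n) this

/-- Let `A` be a unital normed algebra, isometrically and densely embedded via `ι` in a unital
Banach algebra `Ā`, and let `L` be a Leibniz seminorm on `A`.  Let `K̄` be the closure in `Ā`
of the image of `{a : L(a) ≤ 1}`, and let `L̄` be the Minkowski functional
`L̄(c) = inf {r > 0 : c ∈ r K̄}` (with `inf ∅ = ∞`).  Then `L̄` is Leibniz on `Ā`. -/
theorem closure_of_leibniz_is_leibniz {A : Type*} [NormedRing A] [NormOneClass A]
    [NormedAlgebra ℂ A]
    {Abar : Type*} [NormedRing Abar] [NormOneClass Abar] [NormedAlgebra ℂ Abar]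
    [CompleteSpace Abar]
    (ι : A →ₐ[ℂ] Abar) (hisometric : ∀ a : A, ‖ι a‖ = ‖a‖) (hdense : DenseRange ι)
    (L : A → ℝ≥0∞) (hsem : IsESeminorm L) (hleib : IsLeibniz L)
    (Kbar : Set Abar) (hK : Kbar = closure (ι '' {a : A | L a ≤ 1}))
    (Lbar : Abar → ℝ≥0∞)
    (hLbar : ∀ c : Abar, Lbar c = sInf {r : ℝ≥0∞ | ∃ s : ℝ, 0 < s ∧ r = ENNReal.ofReal s ∧
        ∃ k ∈ Kbar, c = (s : ℂ) • k}) :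
    ∀ c d : Abar, Lbar (c * d) ≤ Lbar c * (‖d‖₊ : ℝ≥0∞) + (‖c‖₊ : ℝ≥0∞) * Lbar d := by
  have hK0 : (0 : Abar) ∈ Kbar := by
    rw [hK]
    exact subset_closure ⟨0, by simp [Set.mem_setOf_eq, hsem.1], map_zero ι⟩
  have hL0 : Lbar 0 = 0 := by
    refine le_antisymm ?_ zero_le
    refine ENNReal.le_of_forall_pos_le_add fun ε hε _ => ?_
    rw [hLbar]
    have hmem : (ε : ℝ≥0∞) ∈ {r : ℝ≥0∞ | ∃ s : ℝ, 0 < s ∧ r = ENNReal.ofReal s ∧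
        ∃ k ∈ Kbar, (0 : Abar) = (s : ℂ) • k} :=
      ⟨(ε : ℝ), by exact_mod_cast hε, (ENNReal.ofReal_coe_nnreal).symm, 0, hK0,
        (smul_zero _).symm⟩
    simpa using sInf_le hmem
  -- the key estimate
  have key : ∀ c d : Abar, c ≠ 0 → ∀ s t : ℝ, 0 < s → 0 < t →
      ∀ k ∈ Kbar, ∀ k' ∈ Kbar, c = (s : ℂ) • k → d = (t : ℂ) • k' →
      Lbar (c * d) ≤ ENNReal.ofReal s * (‖d‖₊ : ℝ≥0∞) + (‖c‖₊ : ℝ≥0∞) * ENNReal.ofReal t := by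
    intro c d hc s t hs ht k hk k' hk' hck hdk
    have hcnorm : ‖c‖ = s * ‖k‖ := by
      rw [hck, norm_smul, Complex.norm_real, Real.norm_eq_abs, abs_of_pos hs]
    have hdnorm : ‖d‖ = t * ‖k'‖ := by
      rw [hdk, norm_smul, Complex.norm_real, Real.norm_eq_abs, abs_of_pos ht]
    have hkne : k ≠ 0 := by
      intro h; exact hc (by rw [hck, h, smul_zero])
    set m : ℝ := ‖k‖ + ‖k'‖ with hmdef
    have hm : 0 < m := add_pos_of_pos_of_nonneg (norm_pos_iff.mpr hkne) (norm_nonneg _)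
    have hmem : (((m⁻¹ : ℝ) : ℂ)) • (k * k') ∈ Kbar := by
      rw [hK]
      exact aux_mem_closure ι hisometric L hsem hleib (hK ▸ hk) (hK ▸ hk') hm
    have hcd : c * d = (((s * t * m : ℝ)) : ℂ) • ((((m⁻¹ : ℝ) : ℂ)) • (k * k')) := by
      rw [hck, hdk, smul_mul_smul_comm, smul_smul]
      congr 1
      have hmC : (m : ℂ) ≠ 0 := by exact_mod_cast hm.ne'
      push_cast
      field_simp
    have h1 : Lbar (c * d) ≤ ENNReal.ofReal (s * t * m) := by
      rw [hLbar]
      exact sInf_le ⟨s * t * m, by positivity, rfl, _, hmem, hcd⟩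
    refine h1.trans_eq ?_
    rw [← enorm_eq_nnnorm d, ← ofReal_norm d, ← enorm_eq_nnnorm c, ← ofReal_norm c,
      ← ENNReal.ofReal_mul hs.le, ← ENNReal.ofReal_mul (norm_nonneg c),
      ← ENNReal.ofReal_add (by positivity) (by positivity)]
    congr 1
    rw [hcnorm, hdnorm, hmdef]
    ring
  intro c d
  by_cases hc : c = 0
  · simp [hc, hL0]
  by_cases hd : d = 0
  · simp [hd, hL0]
  have hcn : (‖c‖₊ : ℝ≥0∞) ≠ 0 := by simpa using hc
  have hdn : (‖d‖₊ : ℝ≥0∞) ≠ 0 := by simpa using hd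
  by_cases hLc : Lbar c = ∞
  · have : Lbar c * (‖d‖₊ : ℝ≥0∞) + (‖c‖₊ : ℝ≥0∞) * Lbar d = ∞ := by
      rw [hLc, ENNReal.top_mul hdn]; simp
    exact this ▸ le_top
  by_cases hLd : Lbar d = ∞
  · have : Lbar c * (‖d‖₊ : ℝ≥0∞) + (‖c‖₊ : ℝ≥0∞) * Lbar d = ∞ := by
      rw [hLd, ENNReal.mul_top hcn]; simp
    exact this ▸ le_top
  -- ε-argument
  refine ENNReal.le_of_forall_pos_le_add fun ε hε _ => ?_
  set x : ℝ≥0∞ := (‖c‖₊ : ℝ≥0∞) + (‖d‖₊ : ℝ≥0∞) with hxdef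
  have hx0 : x ≠ 0 := by
    simp only [hxdef, ne_eq, add_eq_zero]
    exact fun h => hcn h.1
  have hxtop : x ≠ ∞ := by
    simp [hxdef]
  set δ : ℝ≥0∞ := (ε : ℝ≥0∞) / x with hδdef
  have hδ : δ ≠ 0 := by
    simp only [hδdef, ne_eq, ENNReal.div_eq_zero_iff, not_or]
    exact ⟨by exact_mod_cast hε.ne', hxtop⟩
  have h1 : sInf {r : ℝ≥0∞ | ∃ s : ℝ, 0 < s ∧ r = ENNReal.ofReal s ∧
      ∃ k ∈ Kbar, c = (s : ℂ) • k} < Lbar c + δ := by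
    rw [← hLbar]
    exact ENNReal.lt_add_right hLc hδ
  have h2 : sInf {r : ℝ≥0∞ | ∃ s : ℝ, 0 < s ∧ r = ENNReal.ofReal s ∧
      ∃ k ∈ Kbar, d = (s : ℂ) • k} < Lbar d + δ := by
    rw [← hLbar]
    exact ENNReal.lt_add_right hLd hδ
  obtain ⟨r1, hr1mem, hr1lt⟩ := sInf_lt_iff.mp h1
  obtain ⟨r2, hr2mem, hr2lt⟩ := sInf_lt_iff.mp h2
  obtain ⟨s, hs, rfl, k, hk, hck⟩ := hr1mem
  obtain ⟨t, ht, rfl, k', hk', hdk⟩ := hr2mem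
  calc Lbar (c * d) ≤ ENNReal.ofReal s * (‖d‖₊ : ℝ≥0∞) + (‖c‖₊ : ℝ≥0∞) * ENNReal.ofReal t :=
        key c d hc s t hs ht k hk k' hk' hck hdk
  _ ≤ (Lbar c + δ) * (‖d‖₊ : ℝ≥0∞) + (‖c‖₊ : ℝ≥0∞) * (Lbar d + δ) :=
        add_le_add (mul_le_mul_left hr1lt.le _) (mul_le_mul_right hr2lt.le _)
  _ = (Lbar c * (‖d‖₊ : ℝ≥0∞) + (‖c‖₊ : ℝ≥0∞) * Lbar d) + δ * x := by
        rw [hxdef]; ring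
  _ = (Lbar c * (‖d‖₊ : ℝ≥0∞) + (‖c‖₊ : ℝ≥0∞) * Lbar d) + ε := by
        rw [hδdef, ENNReal.div_mul_cancel hx0 hxtop]
end

section
/- Let A be a unital Banach algebra with ‖1‖ = 1, and let L be a Leibniz seminorm on A such that L(1) < ∞ and the set {a ∈ A : L(a) ≤ 1} is closed in A. Set A^f = {a ∈ A : L(a) < ∞}. Then: (i) if c ∈ A^f and ‖1 − c‖ < 1, then c is invertible in A and c⁻¹ ∈ A^f; (ii) more generally, if c ∈ A^f is invertible in the norm closure of A^f in A, then c⁻¹ ∈ A^f; that is, A^f is a spectrally stable subalgebra of its norm closure in A. -/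
open scoped ENNReal

/-- Let `A` be a unital Banach algebra and `L` a closed Leibniz seminorm on `A` with
`L(1) < ∞`.  Set `A^f = {a : L(a) < ∞}`.  Then: (i) any `c ∈ A^f` with `‖1 − c‖ < 1` is
invertible with inverse in `A^f`; (ii) any `c ∈ A^f` whose inverse lies in the norm closure
of `A^f` in fact has its inverse in `A^f` (so `A^f` is spectrally stable in its closure). -/
theorem finite_part_spectrally_stable_in_closure {A : Type*} [NormedRing A] [NormOneClass A]
    [NormedAlgebra ℂ A] [CompleteSpace A]
    (L : A → ℝ≥0∞) (hsem : IsESeminorm L) (hleib : IsLeibniz L)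
    (hL1 : L 1 < ⊤) (hclosed : IsClosed {a : A | L a ≤ 1}) :
    (∀ c : A, L c < ⊤ → ‖1 - c‖ < 1 →
      ∃ b : A, c * b = 1 ∧ b * c = 1 ∧ L b < ⊤) ∧
    (∀ c b : A, L c < ⊤ → b ∈ closure {a : A | L a < ⊤} →
      c * b = 1 → b * c = 1 → L b < ⊤) := by
  obtain ⟨hL0, hLsmul, hLadd⟩ := hsem
  -- L is invariant under negation
  have hLneg : ∀ a : A, L (-a) = L a := by
    intro a
    have := hLsmul (-1) (by norm_num) a
    simpa using this
  -- sublevel sets at finite positive levels are closed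
  have hclosedM : ∀ M : ℝ≥0∞, M ≠ 0 → M ≠ ⊤ → IsClosed {a : A | L a ≤ M} := by
    intro M hM0 hMt
    have hpos : 0 < M.toReal := ENNReal.toReal_pos hM0 hMt
    have hiv : ((M.toReal)⁻¹ : ℂ) ≠ 0 := by
      simp only [ne_eq, Complex.ofReal_eq_zero, inv_eq_zero]
      positivity
    have hnorm : (‖((M.toReal : ℂ))⁻¹‖₊ : ℝ≥0∞) = M⁻¹ := by
      rw [← enorm_eq_nnnorm, ← ofReal_norm]
      rw [norm_inv, Complex.norm_real, Real.norm_of_nonneg hpos.le,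
        ENNReal.ofReal_inv_of_pos hpos, ENNReal.ofReal_toReal hMt]
    have hset : {a : A | L a ≤ M}
        = (fun a : A => (((M.toReal : ℂ))⁻¹ : ℂ) • a) ⁻¹' {a : A | L a ≤ 1} := by
      ext a
      simp only [Set.mem_setOf_eq, Set.mem_preimage]
      rw [hLsmul _ (by exact_mod_cast hiv) a, hnorm,
        ENNReal.inv_mul_le_iff hM0 hMt, mul_one]
    rw [hset]
    exact hclosed.preimage (continuous_const_smul _)
  -- lower semicontinuity along sequences
  have hlsc : ∀ (u : ℕ → A) (a : A) (M : ℝ≥0∞), M ≠ ⊤ →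
      Filter.Tendsto u Filter.atTop (nhds a) → (∀ n, L (u n) ≤ M) → L a ≤ M + 1 := by
    intro u a M hMt hu hb
    have h1 : IsClosed {a : A | L a ≤ M + 1} :=
      hclosedM _ (by simp) (by simp [ENNReal.add_ne_top, hMt])
    exact h1.mem_of_tendsto hu
      (Filter.Eventually.of_forall fun n => le_trans (hb n) le_self_add)
  -- subadditivity over finite sums
  have hLsum : ∀ (f : ℕ → A) (N : ℕ),
      L (∑ i ∈ Finset.range N, f i) ≤ ∑ i ∈ Finset.range N, L (f i) := by
    intro f N
    induction N with
    | zero => simp [hL0]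
    | succ n ih =>
      rw [Finset.sum_range_succ, Finset.sum_range_succ]
      exact le_trans (hLadd _ _) (add_le_add_left ih _)
  -- the Leibniz power estimate
  have hpow : ∀ (x : A) (n : ℕ),
      L (x ^ (n + 1)) ≤ (n + 1 : ℝ≥0∞) * (‖x‖₊ : ℝ≥0∞) ^ n * L x := by
    intro x n
    induction n with
    | zero => simp
    | succ n ih =>
      push_cast
      have h1 : L (x ^ (n + 2)) ≤ L x * (‖x ^ (n + 1)‖₊ : ℝ≥0∞)
          + (‖x‖₊ : ℝ≥0∞) * L (x ^ (n + 1)) := by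
        have := hleib x (x ^ (n + 1))
        rwa [← pow_succ'] at this
      have h2 : (‖x ^ (n + 1)‖₊ : ℝ≥0∞) ≤ (‖x‖₊ : ℝ≥0∞) ^ (n + 1) := by
        exact_mod_cast ENNReal.coe_le_coe.2 (nnnorm_pow_le x (n + 1))
      calc L (x ^ (n + 2))
          ≤ L x * (‖x‖₊ : ℝ≥0∞) ^ (n + 1)
            + (‖x‖₊ : ℝ≥0∞) * ((n + 1 : ℝ≥0∞) * (‖x‖₊ : ℝ≥0∞) ^ n * L x) := by
            exact le_trans h1 (add_le_add (mul_le_mul_right h2 _) (mul_le_mul_right ih _))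
        _ = ((n : ℝ≥0∞) + 1 + 1) * (‖x‖₊ : ℝ≥0∞) ^ (n + 1) * L x := by ring
  -- Part (i)
  have part1 : ∀ c : A, L c < ⊤ → ‖1 - c‖ < 1 →
      ∃ b : A, c * b = 1 ∧ b * c = 1 ∧ L b < ⊤ := by
    intro c hc hnc
    set x : A := 1 - c with hxdef
    have hx : ‖x‖ < 1 := hnc
    have hLx : L x < ⊤ := by
      have : L x ≤ L 1 + L (-c) := by
        rw [hxdef, sub_eq_add_neg]
        exact hLadd 1 (-c)
      rw [hLneg] at this
      exact lt_of_le_of_lt this (ENNReal.add_lt_top.2 ⟨hL1, hc⟩)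
    set rr : ℝ := ‖x‖ with hrr
    have hrr0 : 0 ≤ rr := norm_nonneg x
    -- real bound on the weighted geometric series
    set Creal : ℝ := rr / (1 - rr) ^ 2 + (1 - rr)⁻¹ with hCreal
    have hhs : HasSum (fun n : ℕ => ((n : ℝ) + 1) * rr ^ n) Creal := by
      have h1 : HasSum (fun n : ℕ => (n : ℝ) * rr ^ n) (rr / (1 - rr) ^ 2) :=
        hasSum_coe_mul_geometric_of_norm_lt_one (by rwa [Real.norm_of_nonneg hrr0])
      have h2 : HasSum (fun n : ℕ => rr ^ n) ((1 - rr)⁻¹) :=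
        hasSum_geometric_of_lt_one hrr0 hx
      have := h1.add h2
      simpa [add_mul] using this
    have hsumle : ∀ m : ℕ,
        (∑ i ∈ Finset.range m, ((i : ℝ) + 1) * rr ^ i) ≤ Creal :=
      fun m => sum_le_hasSum _ (fun i _ => by positivity) hhs
    -- uniform ENNReal bound for partial sums
    set M : ℝ≥0∞ := L 1 + ENNReal.ofReal Creal * L x with hM
    have hMt : M ≠ ⊤ := by
      refine ENNReal.add_ne_top.2 ⟨hL1.ne, ?_⟩
      exact (ENNReal.mul_lt_top ENNReal.ofReal_lt_top hLx).ne
    have hterm : ∀ i : ℕ, ((i : ℝ≥0∞) + 1) * (‖x‖₊ : ℝ≥0∞) ^ i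
        = ENNReal.ofReal (((i : ℝ) + 1) * rr ^ i) := by
      intro i
      rw [ENNReal.ofReal_mul (by positivity), ENNReal.ofReal_pow hrr0,
        ofReal_norm, enorm_eq_nnnorm]
      congr 1
      rw [ENNReal.ofReal_add (by positivity) zero_le_one]
      simp
    have hbound : ∀ N : ℕ, L (∑ i ∈ Finset.range N, x ^ i) ≤ M := by
      intro N
      cases N with
      | zero => simp [hL0]
      | succ m =>
        calc L (∑ i ∈ Finset.range (m + 1), x ^ i)
            ≤ ∑ i ∈ Finset.range (m + 1), L (x ^ i) := hLsum _ _
          _ = (∑ i ∈ Finset.range m, L (x ^ (i + 1))) + L (x ^ 0) :=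
              Finset.sum_range_succ' _ _
          _ ≤ (∑ i ∈ Finset.range m, ((i : ℝ≥0∞) + 1) * (‖x‖₊ : ℝ≥0∞) ^ i * L x)
              + L 1 := by
              gcongr with i hi
              · simpa using hpow x i
              · simp
          _ = (∑ i ∈ Finset.range m, ((i : ℝ≥0∞) + 1) * (‖x‖₊ : ℝ≥0∞) ^ i) * L x
              + L 1 := by rw [Finset.sum_mul]
          _ ≤ ENNReal.ofReal Creal * L x + L 1 := by
              gcongr
              calc (∑ i ∈ Finset.range m, ((i : ℝ≥0∞) + 1) * (‖x‖₊ : ℝ≥0∞) ^ i)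
                  = ENNReal.ofReal (∑ i ∈ Finset.range m, ((i : ℝ) + 1) * rr ^ i) := by
                    rw [ENNReal.ofReal_sum_of_nonneg (fun i _ => by positivity)]
                    exact Finset.sum_congr rfl fun i _ => hterm i
                _ ≤ ENNReal.ofReal Creal := ENNReal.ofReal_le_ofReal (hsumle m)
          _ = M := by rw [hM, add_comm]
    -- the geometric series inverse
    set u : Aˣ := Units.oneSub x hx with hu
    set b : A := ∑' n : ℕ, x ^ n with hb
    have hub : (↑u⁻¹ : A) = b := rfl
    have hcx : c = (↑u : A) := by
      rw [Units.val_oneSub, hxdef, sub_sub_cancel]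
    refine ⟨b, ?_, ?_, ?_⟩
    · rw [hcx, ← hub, u.mul_inv]
    · rw [hcx, ← hub, u.inv_mul]
    · have hsum : HasSum (fun n : ℕ => x ^ n) b :=
        (summable_geometric_of_norm_lt_one hx).hasSum
      have htend := hsum.tendsto_sum_nat
      have := hlsc _ b M hMt htend hbound
      exact lt_of_le_of_lt this
        (ENNReal.add_lt_top.2 ⟨lt_top_iff_ne_top.2 hMt, ENNReal.one_lt_top⟩)
  refine ⟨part1, ?_⟩
  -- Part (ii)
  intro c b hc hbcl hcb hbc
  have hone : (1 : A) ≠ 0 := by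
    intro h
    have h1 := norm_one (α := A)
    rw [h, norm_zero] at h1
    norm_num at h1
  have hc0 : c ≠ 0 := by
    intro h
    apply hone
    rw [← hcb, h, zero_mul]
  have hcpos : (0 : ℝ) < ‖c‖ := norm_pos_iff.2 hc0
  obtain ⟨a, ha, hab⟩ := Metric.mem_closure_iff.1 hbcl (‖c‖⁻¹) (by positivity)
  have haf : L a < ⊤ := ha
  have h1 : ‖1 - a * c‖ < 1 := by
    have : (1 : A) - a * c = (b - a) * c := by rw [sub_mul, hbc]
    rw [this]
    calc ‖(b - a) * c‖ ≤ ‖b - a‖ * ‖c‖ := norm_mul_le _ _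
      _ < ‖c‖⁻¹ * ‖c‖ := by
          apply mul_lt_mul_of_pos_right _ hcpos
          rwa [← dist_eq_norm]
      _ = 1 := inv_mul_cancel₀ hcpos.ne'
  have hLac : L (a * c) < ⊤ := by
    refine lt_of_le_of_lt (hleib a c) (ENNReal.add_lt_top.2 ⟨?_, ?_⟩)
    · exact ENNReal.mul_lt_top haf ENNReal.coe_lt_top
    · exact ENNReal.mul_lt_top ENNReal.coe_lt_top hc
  obtain ⟨d, hd1, hd2, hdf⟩ := part1 (a * c) hLac h1
  have hbda : b = d * a := by
    calc b = 1 * b := (one_mul b).symm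
      _ = (d * (a * c)) * b := by rw [hd2]
      _ = d * a * (c * b) := by simp [mul_assoc]
      _ = d * a := by rw [hcb, mul_one]
  rw [hbda]
  refine lt_of_le_of_lt (hleib d a) (ENNReal.add_lt_top.2 ⟨?_, ?_⟩)
  · exact ENNReal.mul_lt_top hdf ENNReal.coe_lt_top
  · exact ENNReal.mul_lt_top ENNReal.coe_lt_top haf
end

section
/- Let A be a unital normed algebra with completion Ā, and let L be a lower semicontinuous strongly Leibniz seminorm on A. Let L̄ be the closure of L on Ā (the Minkowski functional of the closure in Ā of {a ∈ A : L(a) ≤ 1}), which extends L. Assume that A^f = {a ∈ A : L(a) < ∞} is dense in Ā and spectrally stable in Ā, i.e. every element of A^f that is invertible in Ā is invertible in A^f. Then L̄ is strongly Leibniz on Ā: L̄(1) = 0, L̄(cd) ≤ L̄(c)‖d‖ + ‖c‖L̄(d) for all c, d ∈ Ā, and L̄(c⁻¹) ≤ ‖c⁻¹‖²·L̄(c) for every invertible c ∈ Ā. -/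
open scoped ENNReal

/-- Limit helper: if `b ≤ ofReal (t + δ)` for all positive `δ`, then `b ≤ ofReal t`. -/
lemma auxA_ofReal_limit {b : ℝ≥0∞} {t : ℝ}
    (h : ∀ δ : ℝ, 0 < δ → b ≤ ENNReal.ofReal (t + δ)) : b ≤ ENNReal.ofReal t := by
  refine ENNReal.le_of_forall_pos_le_add fun ε hε _ => ?_
  calc b ≤ ENNReal.ofReal (t + ε) := h ε (by exact_mod_cast hε)
    _ ≤ ENNReal.ofReal t + ENNReal.ofReal ε := ENNReal.ofReal_add_le
    _ = ENNReal.ofReal t + ε := by rw [ENNReal.ofReal_coe_nnreal]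

/-- Limit helper: approximating `a` from above by `ofReal x`. -/
lemma auxB_ofReal_approx {a b C D : ℝ≥0∞} (hC : C ≠ ⊤) (ha : a ≠ ⊤)
    (h : ∀ x : ℝ, a < ENNReal.ofReal x → b ≤ ENNReal.ofReal x * C + D) :
    b ≤ a * C + D := by
  rcases eq_or_ne D ⊤ with hD | hD
  · simp [hD]
  have hax : a < ENNReal.ofReal (a.toReal + 1) := by
    conv_lhs => rw [← ENNReal.ofReal_toReal ha]
    rw [ENNReal.ofReal_lt_ofReal_iff (by positivity)]
    linarith [ENNReal.toReal_nonneg (a := a)]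
  rcases eq_or_ne C 0 with hC0 | hC0
  · simpa [hC0] using h _ hax
  refine le_of_forall_gt_imp_ge_of_dense fun r hr => ?_
  have hDr : D ≤ r := le_trans (le_add_self) hr.le
  have h1 : a * C < r - D := lt_tsub_iff_right.mpr hr
  have h2 : a < (r - D) / C := (ENNReal.lt_div_iff_mul_lt (Or.inl hC0) (Or.inl hC)).mpr h1
  obtain ⟨x, -, hx1, hx2⟩ := ENNReal.lt_iff_exists_real_btwn.mp h2
  calc b ≤ ENNReal.ofReal x * C + D := h x hx1
    _ ≤ (r - D) + D := add_le_add_left (ENNReal.mul_le_of_le_div hx2.le) D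
    _ = r := tsub_add_cancel_of_le hDr

/-- Let `A` be a unital normed algebra, isometrically and densely embedded via `ι` in a unital
Banach algebra `Ā`, and let `L` be a lower semicontinuous strongly Leibniz seminorm on `A`.
Assume `A^f = {a : L(a) < ∞}` has dense image in `Ā` and is spectrally stable in `Ā`
(its elements invertible in `Ā` are invertible in `A^f`).  Then the closure `L̄` of `L`
(the Minkowski functional of the closure of `{a : L(a) ≤ 1}`) is strongly Leibniz on `Ā`. -/
theorem closure_of_stronglyLeibniz_is_stronglyLeibniz {A : Type*} [NormedRing A]
    [NormOneClass A] [NormedAlgebra ℂ A]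
    {Abar : Type*} [NormedRing Abar] [NormOneClass Abar] [NormedAlgebra ℂ Abar]
    [CompleteSpace Abar]
    (ι : A →ₐ[ℂ] Abar) (hisometric : ∀ a : A, ‖ι a‖ = ‖a‖) (hdense : DenseRange ι)
    (L : A → ℝ≥0∞) (hsem : IsESeminorm L) (hsl : IsStronglyLeibniz L)
    (hlsc : IsClosed {a : A | L a ≤ 1})
    (hfdense : Dense (ι '' {a : A | L a < ⊤}))
    (hstable : ∀ a : A, L a < ⊤ → IsUnit (ι a) →
      ∃ b : A, L b < ⊤ ∧ a * b = 1 ∧ b * a = 1)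
    (Kbar : Set Abar) (hK : Kbar = closure (ι '' {a : A | L a ≤ 1}))
    (Lbar : Abar → ℝ≥0∞)
    (hLbar : ∀ c : Abar, Lbar c = sInf {r : ℝ≥0∞ | ∃ s : ℝ, 0 < s ∧ r = ENNReal.ofReal s ∧
        ∃ k ∈ Kbar, c = (s : ℂ) • k}) :
    Lbar 1 = 0 ∧
    (∀ c d : Abar, Lbar (c * d) ≤ Lbar c * (‖d‖₊ : ℝ≥0∞) + (‖c‖₊ : ℝ≥0∞) * Lbar d) ∧
    (∀ u : Abarˣ, Lbar ((u⁻¹ : Abarˣ) : Abar) ≤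
      ((‖((u⁻¹ : Abarˣ) : Abar)‖₊ : ℝ≥0∞)) ^ 2 * Lbar (u : Abar)) := by
  classical
  -- homogeneity of L for positive real scalars
  have hLsm : ∀ s : ℝ, 0 < s → ∀ a : A, L ((s : ℂ) • a) = ENNReal.ofReal s * L a := by
    intro s hs a
    rw [hsem.2.1 (s : ℂ) (by exact_mod_cast hs.ne') a]
    congr 1
    rw [← enorm_eq_nnnorm, ← ofReal_norm]
    simp [Complex.norm_real, Real.norm_eq_abs, abs_of_pos hs]
  -- Lemma A : membership in the closure of a scaled ball bounds Lbar
  have lemA : ∀ (c : Abar) (r : ℝ), 0 < r →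
      c ∈ closure (ι '' {a : A | L a ≤ ENNReal.ofReal r}) → Lbar c ≤ ENNReal.ofReal r := by
    intro c r hr hc
    rw [hLbar]
    refine sInf_le ⟨r, hr, rfl, ((r⁻¹ : ℝ) : ℂ) • c, ?_, ?_⟩
    · rw [hK]
      have hmap : (fun x : Abar => ((r⁻¹ : ℝ) : ℂ) • x) '' (ι '' {a : A | L a ≤ ENNReal.ofReal r})
          ⊆ ι '' {a : A | L a ≤ 1} := by
        rintro _ ⟨_, ⟨a, ha, rfl⟩, rfl⟩
        refine ⟨((r⁻¹ : ℝ) : ℂ) • a, ?_, (map_smul ι _ _)⟩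
        have : L (((r⁻¹ : ℝ) : ℂ) • a) = ENNReal.ofReal r⁻¹ * L a := hLsm r⁻¹ (by positivity) a
        rw [Set.mem_setOf_eq, this]
        calc ENNReal.ofReal r⁻¹ * L a ≤ ENNReal.ofReal r⁻¹ * ENNReal.ofReal r :=
              mul_le_mul_right ha _
          _ = ENNReal.ofReal (r⁻¹ * r) := (ENNReal.ofReal_mul (by positivity)).symm
          _ = 1 := by rw [inv_mul_cancel₀ hr.ne', ENNReal.ofReal_one]
      exact closure_mono hmap
        (image_closure_subset_closure_image (continuous_const_smul _) ⟨c, hc, rfl⟩)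
    · rw [smul_smul]
      norm_cast
      rw [mul_inv_cancel₀ hr.ne']
      norm_num
  -- Lemma B : extracting an approximation from Lbar c < ofReal x
  have lemB : ∀ (c : Abar) (x : ℝ), Lbar c < ENNReal.ofReal x →
      ∃ s : ℝ, 0 < s ∧ s ≤ x ∧ c ∈ closure (ι '' {a : A | L a ≤ ENNReal.ofReal s}) := by
    intro c x hcx
    rw [hLbar] at hcx
    obtain ⟨r, ⟨s, hs, rfl, k, hk, rfl⟩, hrx⟩ := sInf_lt_iff.mp hcx
    have hx0 : 0 < x := ENNReal.ofReal_pos.mp (lt_of_le_of_lt (zero_le) hrx)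
    refine ⟨s, hs, ((ENNReal.ofReal_lt_ofReal_iff hx0).mp hrx).le, ?_⟩
    rw [hK] at hk
    have hmap : (fun y : Abar => ((s : ℝ) : ℂ) • y) '' (ι '' {a : A | L a ≤ 1})
        ⊆ ι '' {a : A | L a ≤ ENNReal.ofReal s} := by
      rintro _ ⟨_, ⟨a, ha, rfl⟩, rfl⟩
      refine ⟨((s : ℝ) : ℂ) • a, ?_, (map_smul ι _ _)⟩
      rw [Set.mem_setOf_eq, hLsm s hs a]
      calc ENNReal.ofReal s * L a ≤ ENNReal.ofReal s * 1 := mul_le_mul_right ha _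
        _ = ENNReal.ofReal s := mul_one _
    exact closure_mono hmap
      (image_closure_subset_closure_image (continuous_const_smul _) ⟨k, hk, rfl⟩)
  -- Lbar 1 = 0
  have hL1 : Lbar 1 = 0 := by
    refine le_antisymm ?_ (zero_le)
    have h0 : Lbar (1 : Abar) ≤ ENNReal.ofReal 0 := by
      refine auxA_ofReal_limit fun δ hδ => ?_
      rw [zero_add]
      refine lemA 1 δ hδ (subset_closure ⟨1, ?_, map_one ι⟩)
      simp [hsl.2.1]
    simpa using h0
  -- Lbar 0 = 0
  have hL0 : Lbar 0 = 0 := by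
    refine le_antisymm ?_ (zero_le)
    have h0 : Lbar (0 : Abar) ≤ ENNReal.ofReal 0 := by
      refine auxA_ofReal_limit fun δ hδ => ?_
      rw [zero_add]
      refine lemA 0 δ hδ (subset_closure ⟨0, ?_, map_zero ι⟩)
      simp [hsem.1]
    simpa using h0
  -- main Leibniz step with real parameters
  have hstep : ∀ (c d : Abar) (x y : ℝ), Lbar c < ENNReal.ofReal x → Lbar d < ENNReal.ofReal y →
      Lbar (c * d) ≤ ENNReal.ofReal x * (‖d‖₊ : ℝ≥0∞) + (‖c‖₊ : ℝ≥0∞) * ENNReal.ofReal y := by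
    intro c d x y hx hy
    have hx0 : 0 < x := ENNReal.ofReal_pos.mp (lt_of_le_of_lt (zero_le) hx)
    have hy0 : 0 < y := ENNReal.ofReal_pos.mp (lt_of_le_of_lt (zero_le) hy)
    obtain ⟨s, hs, hsx, hcs⟩ := lemB c x hx
    obtain ⟨t, ht, hty, hdt⟩ := lemB d y hy
    obtain ⟨a, ha, hac⟩ := mem_closure_iff_seq_limit.mp hcs
    obtain ⟨b, hb, hbd⟩ := mem_closure_iff_seq_limit.mp hdt
    choose aa hLa hia using ha
    choose bb hLb hib using hb
    have hac' : Filter.Tendsto (fun n => ι (aa n)) Filter.atTop (nhds c) := by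
      simp only [hia]; exact hac
    have hbd' : Filter.Tendsto (fun n => ι (bb n)) Filter.atTop (nhds d) := by
      simp only [hib]; exact hbd
    have key : ∀ δ : ℝ, 0 < δ →
        Lbar (c * d) ≤ ENNReal.ofReal (x * ‖d‖ + ‖c‖ * y + δ) := by
      intro δ hδ
      set δ' := δ / (x + y) with hδ'def
      have hδ' : 0 < δ' := div_pos hδ (by linarith)
      have h1 : ∀ᶠ n in Filter.atTop, ‖ι (aa n)‖ < ‖c‖ + δ' :=
        Filter.Tendsto.eventually_lt_const (by linarith) hac'.norm
      have h2 : ∀ᶠ n in Filter.atTop, ‖ι (bb n)‖ < ‖d‖ + δ' :=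
        Filter.Tendsto.eventually_lt_const (by linarith) hbd'.norm
      have hr : 0 < s * (‖d‖ + δ') + (‖c‖ + δ') * t := by positivity
      refine le_trans (lemA _ _ hr ?_) (ENNReal.ofReal_le_ofReal ?_)
      · refine mem_closure_of_tendsto (hac'.mul hbd') ?_
        filter_upwards [h1, h2] with n h1n h2n
        refine ⟨aa n * bb n, ?_, by rw [map_mul]⟩
        have hna : (‖aa n‖₊ : ℝ≥0∞) ≤ ENNReal.ofReal (‖c‖ + δ') := by
          rw [← enorm_eq_nnnorm, ← ofReal_norm]
          exact ENNReal.ofReal_le_ofReal (by rw [← hisometric]; exact h1n.le)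
        have hnb : (‖bb n‖₊ : ℝ≥0∞) ≤ ENNReal.ofReal (‖d‖ + δ') := by
          rw [← enorm_eq_nnnorm, ← ofReal_norm]
          exact ENNReal.ofReal_le_ofReal (by rw [← hisometric]; exact h2n.le)
        calc L (aa n * bb n)
            ≤ L (aa n) * (‖bb n‖₊ : ℝ≥0∞) + (‖aa n‖₊ : ℝ≥0∞) * L (bb n) := hsl.1 _ _
          _ ≤ ENNReal.ofReal s * ENNReal.ofReal (‖d‖ + δ') +
              ENNReal.ofReal (‖c‖ + δ') * ENNReal.ofReal t := by
              gcongr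
              exacts [hLa n, hLb n]
          _ = ENNReal.ofReal (s * (‖d‖ + δ') + (‖c‖ + δ') * t) := by
              rw [← ENNReal.ofReal_mul hs.le, ← ENNReal.ofReal_mul (by positivity),
                ENNReal.ofReal_add (by positivity) (by positivity)]
      · have hδeq : δ' * (x + y) = δ := by
          rw [hδ'def]; field_simp
        nlinarith [norm_nonneg c, norm_nonneg d, mul_le_mul_of_nonneg_right hsx
          (by positivity : (0:ℝ) ≤ ‖d‖ + δ'), mul_le_mul_of_nonneg_left hty
          (by positivity : (0:ℝ) ≤ ‖c‖ + δ'), mul_pos hx0 hδ', mul_pos hδ' hy0]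
    have := auxA_ofReal_limit key
    calc Lbar (c * d) ≤ ENNReal.ofReal (x * ‖d‖ + ‖c‖ * y) := this
      _ = ENNReal.ofReal x * (‖d‖₊ : ℝ≥0∞) + (‖c‖₊ : ℝ≥0∞) * ENNReal.ofReal y := by
          rw [ENNReal.ofReal_add (by positivity) (by positivity),
            ENNReal.ofReal_mul hx0.le, ENNReal.ofReal_mul (norm_nonneg c),
            ofReal_norm, ofReal_norm, enorm_eq_nnnorm, enorm_eq_nnnorm]
  -- nontriviality of Abar
  have hone : (1 : Abar) ≠ 0 := by
    intro h
    have h1 : ‖(1 : Abar)‖ = 1 := norm_one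
    rw [h, norm_zero] at h1
    exact one_ne_zero h1.symm
  haveI : Nontrivial Abar := nontrivial_of_ne 1 0 hone
  refine ⟨hL1, ?_, ?_⟩
  · -- Leibniz
    intro c d
    rcases eq_or_ne d 0 with rfl | hd
    · simp [hL0]
    rcases eq_or_ne c 0 with rfl | hc
    · simp [hL0]
    rcases eq_or_ne (Lbar c) ⊤ with htop | hcfin
    · rw [htop, ENNReal.top_mul (by simpa using nnnorm_ne_zero_iff.mpr hd)]
      exact le_top.trans_eq (top_add _).symm
    rcases eq_or_ne (Lbar d) ⊤ with htop | hdfin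
    · rw [htop, ENNReal.mul_top (by simpa using nnnorm_ne_zero_iff.mpr hc)]
      exact le_top.trans_eq (add_top _).symm
    have h1 : Lbar (c * d) ≤ Lbar c * (‖d‖₊ : ℝ≥0∞) + (‖c‖₊ : ℝ≥0∞) * Lbar d := by
      refine auxB_ofReal_approx ENNReal.coe_ne_top hcfin fun x hx => ?_
      have h2 : Lbar (c * d) ≤ Lbar d * (‖c‖₊ : ℝ≥0∞) + ENNReal.ofReal x * (‖d‖₊ : ℝ≥0∞) := by
        refine auxB_ofReal_approx ENNReal.coe_ne_top hdfin fun y hy => ?_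
        calc Lbar (c * d) ≤ ENNReal.ofReal x * (‖d‖₊ : ℝ≥0∞) + (‖c‖₊ : ℝ≥0∞) * ENNReal.ofReal y :=
              hstep c d x y hx hy
          _ = ENNReal.ofReal y * (‖c‖₊ : ℝ≥0∞) + ENNReal.ofReal x * (‖d‖₊ : ℝ≥0∞) := by
              rw [add_comm, mul_comm (ENNReal.ofReal y)]
      calc Lbar (c * d) ≤ Lbar d * (‖c‖₊ : ℝ≥0∞) + ENNReal.ofReal x * (‖d‖₊ : ℝ≥0∞) := h2
        _ = ENNReal.ofReal x * (‖d‖₊ : ℝ≥0∞) + (‖c‖₊ : ℝ≥0∞) * Lbar d := by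
            rw [add_comm, mul_comm (Lbar d)]
    exact h1
  · -- strong Leibniz
    intro u
    rcases eq_or_ne (Lbar (u : Abar)) ⊤ with htop | hfin
    · rw [htop, ENNReal.mul_top]
      · exact le_top
      · have : ((u⁻¹ : Abarˣ) : Abar) ≠ 0 := Units.ne_zero _
        simp [pow_eq_zero_iff, nnnorm_ne_zero_iff.mpr this]
    set N := ‖((u⁻¹ : Abarˣ) : Abar)‖ with hNdef
    have hN : 0 ≤ N := norm_nonneg _
    have hstep2 : ∀ x : ℝ, Lbar (u : Abar) < ENNReal.ofReal x →
        Lbar ((u⁻¹ : Abarˣ) : Abar) ≤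
          ENNReal.ofReal x * ((‖((u⁻¹ : Abarˣ) : Abar)‖₊ : ℝ≥0∞)) ^ 2 + 0 := by
      intro x hx
      rw [add_zero]
      have hx0 : 0 < x := ENNReal.ofReal_pos.mp (lt_of_le_of_lt (zero_le) hx)
      obtain ⟨s, hs, hsx, hmem⟩ := lemB _ x hx
      obtain ⟨a, ha, hac⟩ := mem_closure_iff_seq_limit.mp hmem
      choose aa hLa hia using ha
      have hac' : Filter.Tendsto (fun n => ι (aa n)) Filter.atTop (nhds (u : Abar)) := by
        simp only [hia]; exact hac
      have hUopen : ∀ᶠ n in Filter.atTop, IsUnit (ι (aa n)) :=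
        hac' (Units.isOpen.mem_nhds u.isUnit)
      have hinvt : Filter.Tendsto (fun n => Ring.inverse (ι (aa n))) Filter.atTop
          (nhds ((u⁻¹ : Abarˣ) : Abar)) := by
        have := (NormedRing.inverse_continuousAt u).tendsto.comp hac'
        rwa [Ring.inverse_unit] at this
      set bb : ℕ → A := fun n =>
        if h : IsUnit (ι (aa n)) then
          (hstable (aa n) (lt_of_le_of_lt (hLa n) ENNReal.ofReal_lt_top) h).choose
        else 1 with hbbdef
      have hbbspec : ∀ n, IsUnit (ι (aa n)) →
          L (bb n) < ⊤ ∧ aa n * bb n = 1 ∧ bb n * aa n = 1 := by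
        intro n h
        simp only [hbbdef, dif_pos h]
        exact (hstable (aa n) (lt_of_le_of_lt (hLa n) ENNReal.ofReal_lt_top) h).choose_spec
      have hIb : ∀ᶠ n in Filter.atTop, ι (bb n) = Ring.inverse (ι (aa n)) := by
        filter_upwards [hUopen] with n hn
        obtain ⟨-, hab, hba⟩ := hbbspec n hn
        have hmul : ι (aa n) * ι (bb n) = 1 := by rw [← map_mul, hab, map_one]
        calc ι (bb n) = 1 * ι (bb n) := (one_mul _).symm
          _ = (Ring.inverse (ι (aa n)) * ι (aa n)) * ι (bb n) := by
              rw [Ring.inverse_mul_cancel _ hn]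
          _ = Ring.inverse (ι (aa n)) * (ι (aa n) * ι (bb n)) := mul_assoc _ _ _
          _ = Ring.inverse (ι (aa n)) := by rw [hmul, mul_one]
      have hbt : Filter.Tendsto (fun n => ι (bb n)) Filter.atTop
          (nhds ((u⁻¹ : Abarˣ) : Abar)) :=
        hinvt.congr' (hIb.mono fun n h => h.symm)
      have key : ∀ δ : ℝ, 0 < δ →
          Lbar ((u⁻¹ : Abarˣ) : Abar) ≤ ENNReal.ofReal (x * N ^ 2 + δ) := by
        intro δ hδ
        set δ' := min 1 (δ / (x * (2 * N + 1) + 1)) with hδ'def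
        have hδ'pos : 0 < δ' := lt_min one_pos (by positivity)
        have hδ'1 : δ' ≤ 1 := min_le_left _ _
        have hδ'2 : δ' * (x * (2 * N + 1) + 1) ≤ δ := by
          have h2 : δ' ≤ δ / (x * (2 * N + 1) + 1) := min_le_right _ _
          calc δ' * (x * (2 * N + 1) + 1)
              ≤ (δ / (x * (2 * N + 1) + 1)) * (x * (2 * N + 1) + 1) := by
                apply mul_le_mul_of_nonneg_right h2; positivity
            _ = δ := by field_simp
        have hnorm : ∀ᶠ n in Filter.atTop, ‖ι (bb n)‖ < N + δ' :=
          Filter.Tendsto.eventually_lt_const (by linarith) hbt.norm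
        have hr : 0 < (N + δ') ^ 2 * s := by positivity
        refine le_trans (lemA _ _ hr ?_) (ENNReal.ofReal_le_ofReal ?_)
        · refine mem_closure_of_tendsto hbt ?_
          filter_upwards [hUopen, hnorm] with n hn hnN
          obtain ⟨-, hab, hba⟩ := hbbspec n hn
          refine ⟨bb n, ?_, rfl⟩
          have hunit : L (bb n) ≤ ((‖bb n‖₊ : ℝ≥0∞)) ^ 2 * L (aa n) :=
            hsl.2.2 ⟨aa n, bb n, hab, hba⟩
          have hbnorm : (‖bb n‖₊ : ℝ≥0∞) ≤ ENNReal.ofReal (N + δ') := by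
            rw [← enorm_eq_nnnorm, ← ofReal_norm]
            exact ENNReal.ofReal_le_ofReal (by rw [← hisometric]; exact hnN.le)
          calc L (bb n) ≤ ((‖bb n‖₊ : ℝ≥0∞)) ^ 2 * L (aa n) := hunit
            _ ≤ (ENNReal.ofReal (N + δ')) ^ 2 * ENNReal.ofReal s := by
                gcongr
                exact hLa n
            _ = ENNReal.ofReal ((N + δ') ^ 2 * s) := by
                rw [ENNReal.ofReal_mul (by positivity), ENNReal.ofReal_pow (by positivity)]
        · nlinarith [mul_le_mul_of_nonneg_right hsx (by positivity : (0:ℝ) ≤ (N + δ') ^ 2),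
            mul_pos hx0 hδ'pos, sq_nonneg δ', hδ'pos.le, hs.le]
      have hfinal := auxA_ofReal_limit key
      calc Lbar ((u⁻¹ : Abarˣ) : Abar) ≤ ENNReal.ofReal (x * N ^ 2) := hfinal
        _ = ENNReal.ofReal x * ((‖((u⁻¹ : Abarˣ) : Abar)‖₊ : ℝ≥0∞)) ^ 2 := by
            rw [ENNReal.ofReal_mul hx0.le, ENNReal.ofReal_pow hN, hNdef,
              ofReal_norm, enorm_eq_nnnorm]
    have := auxB_ofReal_approx (ENNReal.pow_ne_top ENNReal.coe_ne_top) hfin hstep2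
    rw [add_zero, mul_comm] at this
    exact this
end

section
/- Let C and A be unital normed algebras, let π : C → A be a surjective unital algebra homomorphism that is norm non-increasing, and let L be a Leibniz seminorm on C. Let L̃ denote the quotient seminorm on A, L̃(a) = inf{L(c) : c ∈ C, π(c) = a}. If L is π-compatible, then: (i) the norm on A coincides with the quotient norm, i.e. ‖a‖ = inf{‖c‖ : c ∈ C, π(c) = a} for every a ∈ A; and (ii) L̃ is Leibniz: L̃(ab) ≤ L̃(a)‖b‖ + ‖a‖L̃(b) for all a, b ∈ A. -/
open scoped ENNReal

/-- Let `π : C → A` be a surjective norm non-increasing unital homomorphism of unital normed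
algebras, let `L` be a Leibniz seminorm on `C`, and let `L̃` be the quotient seminorm on `A`.
If `L` is `π`-compatible, then the norm on `A` is the quotient norm from `C`, and `L̃` is
Leibniz. -/
theorem quotient_of_compatible_leibniz {C A : Type*}
    [NormedRing C] [NormOneClass C] [NormedAlgebra ℂ C]
    [NormedRing A] [NormOneClass A] [NormedAlgebra ℂ A]
    (π : C →ₐ[ℂ] A) (hsurj : Function.Surjective π) (hcontr : ∀ c : C, ‖π c‖ ≤ ‖c‖)
    (L : C → ℝ≥0∞) (hsem : IsESeminorm L) (hleib : IsLeibniz L)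
    (Lt : A → ℝ≥0∞) (hLt : ∀ a : A, Lt a = sInf {r : ℝ≥0∞ | ∃ c : C, π c = a ∧ r = L c})
    (hcompat : ∀ a : A, ∀ ε : ℝ, 0 < ε → ∃ c : C, π c = a ∧
      L c ≤ Lt a + ENNReal.ofReal ε ∧ ‖c‖ ≤ ‖a‖ + ε) :
    (∀ a : A, ‖a‖ = sInf {r : ℝ | ∃ c : C, π c = a ∧ r = ‖c‖}) ∧
    (∀ a b : A, Lt (a * b) ≤ Lt a * (‖b‖₊ : ℝ≥0∞) + (‖a‖₊ : ℝ≥0∞) * Lt b) := by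
  have hLt0 : Lt 0 = 0 := by
    refine le_antisymm ?_ (zero_le)
    rw [hLt]
    have : (0 : ℝ≥0∞) ∈ {r : ℝ≥0∞ | ∃ c : C, π c = 0 ∧ r = L c} :=
      ⟨0, by simp, hsem.1.symm⟩
    simpa [hsem.1] using sInf_le this
  have hbdd : ∀ a : A, BddBelow {r : ℝ | ∃ c : C, π c = a ∧ r = ‖c‖} :=
    fun a => ⟨0, fun r ⟨c, _, hr⟩ => hr ▸ norm_nonneg c⟩
  constructor
  · intro a
    refine le_antisymm ?_ ?_
    · obtain ⟨c0, hc0⟩ := hsurj a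
      refine le_csInf ⟨‖c0‖, c0, hc0, rfl⟩ ?_
      rintro r ⟨c, hc, rfl⟩
      calc ‖a‖ = ‖π c‖ := by rw [hc]
        _ ≤ ‖c‖ := hcontr c
    · refine le_of_forall_pos_le_add ?_
      intro ε hε
      obtain ⟨c, hc, -, hnorm⟩ := hcompat a ε hε
      exact le_trans (csInf_le (hbdd a) ⟨c, hc, rfl⟩) hnorm
  · intro a b
    rcases eq_or_ne (Lt a) ∞ with haT | haT
    · rcases eq_or_ne b 0 with rfl | hb0
      · simp [hLt0]
      · have : (‖b‖₊ : ℝ≥0∞) ≠ 0 := by simpa using hb0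
        rw [haT, ENNReal.top_mul this]
        simp
    rcases eq_or_ne (Lt b) ∞ with hbT | hbT
    · rcases eq_or_ne a 0 with rfl | ha0
      · simp [hLt0]
      · have : (‖a‖₊ : ℝ≥0∞) ≠ 0 := by simpa using ha0
        rw [hbT, ENNReal.mul_top this]
        simp
    have key : ∀ ε : ℝ, 0 < ε → Lt (a * b) ≤
        (Lt a + ENNReal.ofReal ε) * ((‖b‖₊ : ℝ≥0∞) + ENNReal.ofReal ε) +
        ((‖a‖₊ : ℝ≥0∞) + ENNReal.ofReal ε) * (Lt b + ENNReal.ofReal ε) := by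
      intro ε hε
      obtain ⟨c, hc, hLc, hnc⟩ := hcompat a ε hε
      obtain ⟨d, hd, hLd, hnd⟩ := hcompat b ε hε
      have h1 : Lt (a * b) ≤ L (c * d) := by
        rw [hLt]
        exact sInf_le ⟨c * d, by rw [map_mul, hc, hd], rfl⟩
      have hdc : (‖d‖₊ : ℝ≥0∞) ≤ (‖b‖₊ : ℝ≥0∞) + ENNReal.ofReal ε := by
        rw [← (show ENNReal.ofReal ‖d‖ = (‖d‖₊ : ℝ≥0∞) from ofReal_norm d),
          ← (show ENNReal.ofReal ‖b‖ = (‖b‖₊ : ℝ≥0∞) from ofReal_norm b),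
          ← ENNReal.ofReal_add (norm_nonneg b) hε.le]
        exact ENNReal.ofReal_le_ofReal hnd
      have hcc : (‖c‖₊ : ℝ≥0∞) ≤ (‖a‖₊ : ℝ≥0∞) + ENNReal.ofReal ε := by
        rw [← (show ENNReal.ofReal ‖c‖ = (‖c‖₊ : ℝ≥0∞) from ofReal_norm c),
          ← (show ENNReal.ofReal ‖a‖ = (‖a‖₊ : ℝ≥0∞) from ofReal_norm a),
          ← ENNReal.ofReal_add (norm_nonneg a) hε.le]
        exact ENNReal.ofReal_le_ofReal hnc
      calc Lt (a * b) ≤ L (c * d) := h1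
        _ ≤ L c * (‖d‖₊ : ℝ≥0∞) + (‖c‖₊ : ℝ≥0∞) * L d := hleib c d
        _ ≤ (Lt a + ENNReal.ofReal ε) * ((‖b‖₊ : ℝ≥0∞) + ENNReal.ofReal ε) +
            ((‖a‖₊ : ℝ≥0∞) + ENNReal.ofReal ε) * (Lt b + ENNReal.ofReal ε) :=
          add_le_add (mul_le_mul' hLc hdc) (mul_le_mul' hcc hLd)
    have h0 : Filter.Tendsto (fun ε : ℝ => ENNReal.ofReal ε) (nhdsWithin 0 (Set.Ioi 0))
        (nhds 0) := by
      simpa using (ENNReal.continuous_ofReal.tendsto 0).mono_left nhdsWithin_le_nhds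
    have t1 : Filter.Tendsto (fun ε : ℝ => Lt a + ENNReal.ofReal ε)
        (nhdsWithin 0 (Set.Ioi 0)) (nhds (Lt a)) := by
      simpa using Filter.Tendsto.add (tendsto_const_nhds (x := Lt a)) h0
    have t2 : Filter.Tendsto (fun ε : ℝ => (‖b‖₊ : ℝ≥0∞) + ENNReal.ofReal ε)
        (nhdsWithin 0 (Set.Ioi 0)) (nhds (‖b‖₊ : ℝ≥0∞)) := by
      simpa using Filter.Tendsto.add (tendsto_const_nhds (x := ((‖b‖₊ : ℝ≥0∞)))) h0
    have t3 : Filter.Tendsto (fun ε : ℝ => (‖a‖₊ : ℝ≥0∞) + ENNReal.ofReal ε)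
        (nhdsWithin 0 (Set.Ioi 0)) (nhds (‖a‖₊ : ℝ≥0∞)) := by
      simpa using Filter.Tendsto.add (tendsto_const_nhds (x := ((‖a‖₊ : ℝ≥0∞)))) h0
    have t4 : Filter.Tendsto (fun ε : ℝ => Lt b + ENNReal.ofReal ε)
        (nhdsWithin 0 (Set.Ioi 0)) (nhds (Lt b)) := by
      simpa using Filter.Tendsto.add (tendsto_const_nhds (x := Lt b)) h0
    have tmul : Filter.Tendsto (fun ε : ℝ =>
        (Lt a + ENNReal.ofReal ε) * ((‖b‖₊ : ℝ≥0∞) + ENNReal.ofReal ε) +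
        ((‖a‖₊ : ℝ≥0∞) + ENNReal.ofReal ε) * (Lt b + ENNReal.ofReal ε))
        (nhdsWithin 0 (Set.Ioi 0)) (nhds (Lt a * (‖b‖₊ : ℝ≥0∞) + (‖a‖₊ : ℝ≥0∞) * Lt b)) :=
      Filter.Tendsto.add
        (ENNReal.Tendsto.mul t1 (Or.inr ENNReal.coe_ne_top) t2 (Or.inr haT))
        (ENNReal.Tendsto.mul t3 (Or.inr hbT) t4 (Or.inr ENNReal.coe_ne_top))
    refine ge_of_tendsto tmul ?_
    filter_upwards [self_mem_nhdsWithin] with ε (hε : ε ∈ Set.Ioi 0)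
    exact key ε hε
end

section
/- Let A and B be unital normed algebras, let Ω be a normed A-B-bimodule, and let ω₀ ∈ Ω. Define N on the algebra A ⊕ B (with coordinatewise operations, unit (1_A, 1_B), and norm ‖(a,b)‖ = max(‖a‖, ‖b‖)) by N(a,b) = ‖a·ω₀ − ω₀·b‖. Then: (i) N satisfies the cross-Leibniz inequality N(aa', bb') ≤ N(a,b)·‖b'‖ + ‖a‖·N(a',b') for all a, a' ∈ A and b, b' ∈ B; (ii) N is a continuous strongly Leibniz seminorm on A ⊕ B: N(1_A, 1_B) = 0, N((a,b)(a',b')) ≤ N(a,b)‖(a',b')‖ + ‖(a,b)‖N(a',b'), and N(a⁻¹, b⁻¹) ≤ ‖(a⁻¹, b⁻¹)‖²·N(a,b) whenever a is invertible in A and b is invertible in B. -/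
open MulOpposite

/-- Let `A`, `B` be unital normed algebras, `Ω` a normed `A`-`B`-bimodule and `ω₀ ∈ Ω`.
The seminorm `N(a, b) = ‖a ω₀ − ω₀ b‖` on `A ⊕ B` (with the max norm) satisfies the
cross-Leibniz inequality and is a continuous strongly Leibniz seminorm. -/
theorem bimodule_bridge_stronglyLeibniz {A B : Type*}
    [NormedRing A] [NormOneClass A] [NormedAlgebra ℂ A]
    [NormedRing B] [NormOneClass B] [NormedAlgebra ℂ B]
    {Ω : Type*} [NormedAddCommGroup Ω] [Module ℂ Ω]
    [Module A Ω] [Module Bᵐᵒᵖ Ω] [SMulCommClass A Bᵐᵒᵖ Ω]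
    [IsScalarTower ℂ A Ω] [IsScalarTower ℂ Bᵐᵒᵖ Ω]
    (hnorm : ∀ (a : A) (ω : Ω) (b : B), ‖a • (op b • ω)‖ ≤ ‖a‖ * ‖ω‖ * ‖b‖)
    (ω₀ : Ω)
    (N : A × B → ℝ)
    (hN : ∀ p : A × B, N p = ‖p.1 • ω₀ - op p.2 • ω₀‖) :
    (∀ (a a' : A) (b b' : B),
      N (a * a', b * b') ≤ N (a, b) * ‖b'‖ + ‖a‖ * N (a', b')) ∧
    N 1 = 0 ∧ N 0 = 0 ∧
    (∀ (t : ℂ) (p : A × B), N (t • p) = ‖t‖ * N p) ∧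
    (∀ p q : A × B, N (p + q) ≤ N p + N q) ∧
    Continuous N ∧
    (∀ p q : A × B, N (p * q) ≤ N p * ‖q‖ + ‖p‖ * N q) ∧
    (∀ (u : Aˣ) (v : Bˣ), N (((u⁻¹ : Aˣ) : A), ((v⁻¹ : Bˣ) : B)) ≤
      ‖((((u⁻¹ : Aˣ) : A)), (((v⁻¹ : Bˣ) : B)))‖ ^ 2 * N ((u : A), (v : B))) := by
  -- left action bound
  have hA : ∀ (a : A) (ω : Ω), ‖a • ω‖ ≤ ‖a‖ * ‖ω‖ := by
    intro a ω
    have := hnorm a ω 1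
    simpa using this
  -- right action bound
  have hB : ∀ (b : B) (ω : Ω), ‖op b • ω‖ ≤ ‖ω‖ * ‖b‖ := by
    intro b ω
    have := hnorm 1 ω b
    simpa using this
  have hC : ∀ (t : ℂ) (ω : Ω), ‖t • ω‖ ≤ ‖t‖ * ‖ω‖ := by
    intro t ω
    have h : t • ω = (algebraMap ℂ A t) • ω := by
      rw [Algebra.algebraMap_eq_smul_one, smul_assoc, one_smul]
    rw [h]
    calc ‖(algebraMap ℂ A t) • ω‖ ≤ ‖algebraMap ℂ A t‖ * ‖ω‖ := hA _ _
      _ = ‖t‖ * ‖ω‖ := by rw [norm_algebraMap']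
  have hCeq : ∀ (t : ℂ) (ω : Ω), ‖t • ω‖ = ‖t‖ * ‖ω‖ := by
    intro t ω
    rcases eq_or_ne t 0 with rfl | ht
    · simp
    · refine le_antisymm (hC t ω) ?_
      have h2 : ‖ω‖ ≤ ‖t⁻¹‖ * ‖t • ω‖ := by
        have := hC t⁻¹ (t • ω)
        rwa [inv_smul_smul₀ ht] at this
      have h3 : ‖t‖ * ‖ω‖ ≤ ‖t‖ * (‖t⁻¹‖ * ‖t • ω‖) :=
        mul_le_mul_of_nonneg_left h2 (norm_nonneg _)
      calc ‖t‖ * ‖ω‖ ≤ ‖t‖ * (‖t⁻¹‖ * ‖t • ω‖) := h3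
        _ = (‖t‖ * ‖t⁻¹‖) * ‖t • ω‖ := by ring
        _ = ‖t • ω‖ := by rw [← norm_mul, mul_inv_cancel₀ ht, norm_one, one_mul]
  have hNn : ∀ p : A × B, 0 ≤ N p := by
    intro p; rw [hN]; positivity
  -- key algebraic identity
  have key : ∀ (a a' : A) (b b' : B), (a * a') • ω₀ - op (b * b') • ω₀
      = a • (a' • ω₀ - op b' • ω₀) + op b' • (a • ω₀ - op b • ω₀) := by
    intro a a' b b'
    rw [smul_sub, smul_sub, mul_smul, op_mul, mul_smul, smul_comm a (op b') ω₀]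
    abel
  have cross : ∀ (a a' : A) (b b' : B),
      N (a * a', b * b') ≤ N (a, b) * ‖b'‖ + ‖a‖ * N (a', b') := by
    intro a a' b b'
    rw [hN, hN, hN]
    simp only
    rw [key]
    calc ‖a • (a' • ω₀ - op b' • ω₀) + op b' • (a • ω₀ - op b • ω₀)‖
        ≤ ‖a • (a' • ω₀ - op b' • ω₀)‖ + ‖op b' • (a • ω₀ - op b • ω₀)‖ :=
          norm_add_le _ _
      _ ≤ ‖a‖ * ‖a' • ω₀ - op b' • ω₀‖ + ‖a • ω₀ - op b • ω₀‖ * ‖b'‖ :=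
          add_le_add (hA _ _) (hB _ _)
      _ = ‖a • ω₀ - op b • ω₀‖ * ‖b'‖ + ‖a‖ * ‖a' • ω₀ - op b' • ω₀‖ := by ring
  refine ⟨cross, ?_, ?_, ?_, ?_, ?_, ?_, ?_⟩
  · rw [hN]; simp
  · rw [hN]; simp
  · intro t p
    rw [hN, hN]
    have h1 : (t • p).1 • ω₀ = t • (p.1 • ω₀) := by
      rw [Prod.smul_fst, smul_assoc]
    have h2 : op (t • p).2 • ω₀ = t • (op p.2 • ω₀) := by
      rw [Prod.smul_snd, op_smul, smul_assoc]
    rw [h1, h2, ← smul_sub, hCeq]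
  · intro p q
    rw [hN, hN, hN]
    have h : (p + q).1 • ω₀ - op (p + q).2 • ω₀
        = (p.1 • ω₀ - op p.2 • ω₀) + (q.1 • ω₀ - op q.2 • ω₀) := by
      rw [Prod.fst_add, Prod.snd_add, add_smul, op_add, add_smul]
      abel
    rw [h]
    exact norm_add_le _ _
  · have hfun : N = fun p : A × B => ‖p.1 • ω₀ - op p.2 • ω₀‖ := funext hN
    rw [hfun]
    have c1 : Continuous fun a : A => a • ω₀ := by
      apply LipschitzWith.continuous (K := ‖ω₀‖₊)
      apply LipschitzWith.of_dist_le_mul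
      intro a a'
      rw [dist_eq_norm, dist_eq_norm, ← sub_smul]
      simpa [mul_comm] using hA (a - a') ω₀
    have c2 : Continuous fun b : B => op b • ω₀ := by
      apply LipschitzWith.continuous (K := ‖ω₀‖₊)
      apply LipschitzWith.of_dist_le_mul
      intro b b'
      rw [dist_eq_norm, dist_eq_norm, ← sub_smul, ← op_sub]
      simpa [mul_comm] using hB (b - b') ω₀
    exact ((c1.comp continuous_fst).sub (c2.comp continuous_snd)).norm
  · intro p q
    have h := cross p.1 q.1 p.2 q.2
    have h1 : ‖q.2‖ ≤ ‖q‖ := norm_snd_le q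
    have h2 : ‖p.1‖ ≤ ‖p‖ := norm_fst_le p
    have := hNn (p.1, p.2)
    have := hNn (q.1, q.2)
    calc N (p * q) = N (p.1 * q.1, p.2 * q.2) := rfl
      _ ≤ N (p.1, p.2) * ‖q.2‖ + ‖p.1‖ * N (q.1, q.2) := h
      _ ≤ N (p.1, p.2) * ‖q‖ + ‖p‖ * N (q.1, q.2) := by
          apply add_le_add
          · exact mul_le_mul_of_nonneg_left h1 (by assumption)
          · exact mul_le_mul_of_nonneg_right h2 (by assumption)
      _ = N p * ‖q‖ + ‖p‖ * N q := by rfl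
  · intro u v
    set X := (u : A) • ω₀ - op (v : B) • ω₀ with hX
    have e : ((u⁻¹ : Aˣ) : A) • (op ((v⁻¹ : Bˣ) : B) • X)
        = op ((v⁻¹ : Bˣ) : B) • ω₀ - ((u⁻¹ : Aˣ) : A) • ω₀ := by
      rw [hX, smul_sub, smul_sub]
      congr 1
      · rw [smul_comm ((u⁻¹ : Aˣ) : A) (op ((v⁻¹ : Bˣ) : B)), smul_smul,
          Units.inv_mul, one_smul]
      · rw [smul_smul, ← op_mul, Units.mul_inv, op_one, one_smul]
    have heq : N (((u⁻¹ : Aˣ) : A), ((v⁻¹ : Bˣ) : B))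
        = ‖((u⁻¹ : Aˣ) : A) • (op ((v⁻¹ : Bˣ) : B) • X)‖ := by
      rw [hN]
      simp only
      rw [e]
      exact norm_sub_rev _ _
    rw [heq]
    have hb := hnorm ((u⁻¹ : Aˣ) : A) X ((v⁻¹ : Bˣ) : B)
    set M := ‖((((u⁻¹ : Aˣ) : A)), (((v⁻¹ : Bˣ) : B)))‖ with hM
    have hu : ‖((u⁻¹ : Aˣ) : A)‖ ≤ M :=
      norm_fst_le ((((u⁻¹ : Aˣ) : A)), (((v⁻¹ : Bˣ) : B)))
    have hv : ‖((v⁻¹ : Bˣ) : B)‖ ≤ M :=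
      norm_snd_le ((((u⁻¹ : Aˣ) : A)), (((v⁻¹ : Bˣ) : B)))
    have hXn : ‖X‖ = N ((u : A), (v : B)) := by rw [hN]
    have hXnn : (0 : ℝ) ≤ ‖X‖ := norm_nonneg _
    have hMnn : (0 : ℝ) ≤ M := norm_nonneg _
    calc ‖((u⁻¹ : Aˣ) : A) • (op ((v⁻¹ : Bˣ) : B) • X)‖
        ≤ ‖((u⁻¹ : Aˣ) : A)‖ * ‖X‖ * ‖((v⁻¹ : Bˣ) : B)‖ := hb
      _ ≤ M * ‖X‖ * M := by
          apply mul_le_mul _ hv (norm_nonneg _) (by positivity)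
          exact mul_le_mul_of_nonneg_right hu hXnn
      _ = M ^ 2 * ‖X‖ := by ring
      _ = M ^ 2 * N ((u : A), (v : B)) := by rw [hXn]
end

section
/- Let A and B be unital C*-algebras, let L_A and L_B be seminorms (values in [0,∞]) on A and B respectively, let Ω be a normed A-B-bimodule with a distinguished element ω₀ ≠ 0, and set N(a,b) = ‖a·ω₀ − ω₀·b‖. Assume the bridge condition: for every self-adjoint a ∈ A and every ε > 0 there is a self-adjoint b ∈ B with max(L_B(b), N(a,b)) ≤ L_A(a) + ε, and symmetrically for every self-adjoint b ∈ B and ε > 0 there is a self-adjoint a ∈ A with max(L_A(a), N(a,b)) ≤ L_B(b) + ε. Define L on A ⊕ B by L(a,b) = max(L_A(a), L_B(b), N(a,b), N(a*, b*)). Then the quotients of L agree with L_A and L_B on self-adjoint elements: for every self-adjoint a ∈ A, inf{L(a,b) : b ∈ B} = L_A(a), and for every self-adjoint b ∈ B, inf{L(a,b) : a ∈ A} = L_B(b). -/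
open scoped ENNReal
open MulOpposite

/-- Let `A`, `B` be unital C*-algebras with seminorms `L_A`, `L_B`, let `Ω` be a normed
`A`-`B`-bimodule with `ω₀ ≠ 0`, and set `N(a, b) = ‖a ω₀ − ω₀ b‖`.  If the bridge condition
holds, then for `L(a,b) = max(L_A(a), L_B(b), N(a,b), N(a*,b*))` the quotients of `L` agree
with `L_A` and `L_B` on self-adjoint elements. -/
theorem bridge_quotients_selfAdjoint {A B : Type*}
    [NormedRing A] [StarRing A] [CStarRing A] [NormedAlgebra ℂ A] [StarModule ℂ A]
    [CompleteSpace A] [NormOneClass A]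
    [NormedRing B] [StarRing B] [CStarRing B] [NormedAlgebra ℂ B] [StarModule ℂ B]
    [CompleteSpace B] [NormOneClass B]
    (LA : A → ℝ≥0∞) (LB : B → ℝ≥0∞) (hsemA : IsESeminorm LA) (hsemB : IsESeminorm LB)
    {Ω : Type*} [NormedAddCommGroup Ω]
    [Module A Ω] [Module Bᵐᵒᵖ Ω] [SMulCommClass A Bᵐᵒᵖ Ω]
    (hnorm : ∀ (a : A) (ω : Ω) (b : B), ‖a • (op b • ω)‖ ≤ ‖a‖ * ‖ω‖ * ‖b‖)
    (ω₀ : Ω) (hω₀ : ω₀ ≠ 0)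
    (N : A → B → ℝ) (hN : ∀ (a : A) (b : B), N a b = ‖a • ω₀ - op b • ω₀‖)
    (hbridgeA : ∀ a : A, IsSelfAdjoint a → ∀ ε : ℝ, 0 < ε → ∃ b : B, IsSelfAdjoint b ∧
      max (LB b) (ENNReal.ofReal (N a b)) ≤ LA a + ENNReal.ofReal ε)
    (hbridgeB : ∀ b : B, IsSelfAdjoint b → ∀ ε : ℝ, 0 < ε → ∃ a : A, IsSelfAdjoint a ∧
      max (LA a) (ENNReal.ofReal (N a b)) ≤ LB b + ENNReal.ofReal ε)
    (L : A × B → ℝ≥0∞)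
    (hL : ∀ p : A × B, L p = max (max (LA p.1) (LB p.2))
      (max (ENNReal.ofReal (N p.1 p.2)) (ENNReal.ofReal (N (star p.1) (star p.2))))) :
    (∀ a : A, IsSelfAdjoint a → (⨅ b : B, L (a, b)) = LA a) ∧
    (∀ b : B, IsSelfAdjoint b → (⨅ a : A, L (a, b)) = LB b) := by
  constructor
  · intro a ha
    refine le_antisymm ?_ ?_
    · refine ENNReal.le_of_forall_pos_le_add fun ε hε _ => ?_
      obtain ⟨b, hb, hmax⟩ := hbridgeA a ha ε hε
      refine le_trans (iInf_le _ b) ?_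
      rw [hL]
      simp only [ha.star_eq, hb.star_eq]
      have h1 : LA a ≤ LA a + ε := le_self_add
      have h2 : LB b ≤ LA a + ε := by
        simpa [ENNReal.ofReal_coe_nnreal] using (le_max_left _ _).trans hmax
      have h3 : ENNReal.ofReal (N a b) ≤ LA a + ε := by
        simpa [ENNReal.ofReal_coe_nnreal] using (le_max_right _ _).trans hmax
      simp only [max_le_iff]
      exact ⟨⟨h1, h2⟩, h3, h3⟩
    · refine le_iInf fun b => ?_
      rw [hL]
      exact le_max_of_le_left (le_max_left _ _)
  · intro b hb
    refine le_antisymm ?_ ?_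
    · refine ENNReal.le_of_forall_pos_le_add fun ε hε _ => ?_
      obtain ⟨a, ha, hmax⟩ := hbridgeB b hb ε hε
      refine le_trans (iInf_le _ a) ?_
      rw [hL]
      simp only [ha.star_eq, hb.star_eq]
      have h1 : LB b ≤ LB b + ε := le_self_add
      have h2 : LA a ≤ LB b + ε := by
        simpa [ENNReal.ofReal_coe_nnreal] using (le_max_left _ _).trans hmax
      have h3 : ENNReal.ofReal (N a b) ≤ LB b + ε := by
        simpa [ENNReal.ofReal_coe_nnreal] using (le_max_right _ _).trans hmax
      simp only [max_le_iff]
      exact ⟨⟨h2, h1⟩, h3, h3⟩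
    · refine le_iInf fun a => ?_
      rw [hL]
      exact le_max_of_le_left (le_max_right _ _)
end

section
/- Let H be a finite-dimensional complex Hilbert space and let X be a compact Hausdorff space. Let p : X → B(H) be a continuous map such that for every x ∈ X, p(x) is a rank-one orthogonal projection. Define σ : B(H) → C(X) by (σ_T)(x) = tr(T·p(x)). Then for every f ∈ C(X) and T ∈ B(H), the operator norm of the linear map B(H) → C(X), S ↦ f·σ_S − σ_{TS} (where B(H) carries the operator norm and C(X) the supremum norm) equals sup{‖p(x)∘(f(x)·I − T)‖ : x ∈ X}, where ‖·‖ on the right is the operator norm on B(H). -/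
open ContinuousLinearMap

local notation "⟪" x ", " y "⟫" => @inner ℂ _ _ x y

section Aux
variable {H : Type*} [NormedAddCommGroup H] [InnerProductSpace ℂ H] [FiniteDimensional ℂ H]

lemma exists_unit_vec (P : H →L[ℂ] H) (h1 : IsSelfAdjoint P) (h2 : IsIdempotentElem P)
    (h3 : Module.finrank ℂ (LinearMap.range ((P : H →L[ℂ] H) : H →ₗ[ℂ] H)) = 1) :
    ∃ e : H, ‖e‖ = 1 ∧ ∀ v, P v = ⟪e, v⟫ • e := by
  rw [finrank_eq_one_iff'] at h3
  obtain ⟨⟨v, hv⟩, hv0, hspan⟩ := h3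
  have hvne : v ≠ 0 := fun h => hv0 (Subtype.ext h)
  have hvnorm : ‖v‖ ≠ 0 := norm_ne_zero_iff.mpr hvne
  set e : H := (‖v‖ : ℂ)⁻¹ • v with he_def
  have hee : ‖e‖ = 1 := by
    simp [he_def, norm_smul, inv_mul_cancel₀ hvnorm]
  have hPfix : ∀ u ∈ LinearMap.range ((P : H →L[ℂ] H) : H →ₗ[ℂ] H), P u = u := by
    rintro u ⟨z, rfl⟩
    have := congrArg (fun (Q : H →L[ℂ] H) => Q z) h2
    simpa [ContinuousLinearMap.mul_apply] using this
  have hPe : P e = e := by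
    simp only [he_def, map_smul]
    rw [hPfix v hv]
  haveI : CompleteSpace H := FiniteDimensional.complete ℂ H
  have hsym : ∀ a b : H, ⟪P a, b⟫ = ⟪a, P b⟫ :=
    fun a b => ContinuousLinearMap.isSelfAdjoint_iff_isSymmetric.mp h1 a b
  refine ⟨e, hee, fun u => ?_⟩
  obtain ⟨c, hc⟩ := hspan ⟨P u, LinearMap.mem_range_self _ u⟩
  have hc' : c • v = P u := congrArg Subtype.val hc
  have h1' : P u = (c * ‖v‖) • e := by
    rw [← hc', he_def, smul_smul]
    rw [mul_assoc, mul_inv_cancel₀ (by exact_mod_cast hvnorm), mul_one]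
  have hinner : ⟪e, P u⟫ = c * ‖v‖ := by
    rw [h1', inner_smul_right, inner_self_eq_norm_sq_to_K, hee]
    norm_num
  have : ⟪e, P u⟫ = ⟪e, u⟫ := by rw [← hsym, hPe]
  rw [h1', ← hinner, this]

lemma trace_rankOne' (e u : H) :
    LinearMap.trace ℂ H ((((innerSL ℂ e).smulRight u : H →L[ℂ] H)) : H →ₗ[ℂ] H) = ⟪e, u⟫ := by
  have heq : ((((innerSL ℂ e).smulRight u : H →L[ℂ] H)) : H →ₗ[ℂ] H)
      = dualTensorHom ℂ H H (((innerSL ℂ e).toLinearMap : Module.Dual ℂ H) ⊗ₜ u) := by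
    ext v
    simp [dualTensorHom_apply]
  rw [heq, LinearMap.trace_eq_contract_apply, contractLeft_apply]
  simp

end Aux

/-- Let `H` be a finite-dimensional complex Hilbert space, `X` a (nonempty) compact Hausdorff
space, and `p : X → B(H)` continuous with each `p(x)` a rank-one orthogonal projection.
Define the Berezin symbol `σ_T(x) = tr(T p(x))`.  Then the operator norm of the linear map
`S ↦ f σ_S − σ_{TS}` from `B(H)` to `C(X)` (expressed as a double supremum over the unit
ball of `B(H)` and over `X`) equals `sup_x ‖p(x) ∘ (f(x) I − T)‖`. -/
theorem berezin_bridge_norm {H : Type*} [NormedAddCommGroup H] [InnerProductSpace ℂ H]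
    [FiniteDimensional ℂ H]
    {X : Type*} [TopologicalSpace X] [CompactSpace X] [T2Space X] [Nonempty X]
    (p : C(X, H →L[ℂ] H))
    (hproj : ∀ x : X, IsSelfAdjoint (p x) ∧ IsIdempotentElem (p x) ∧
      Module.finrank ℂ (LinearMap.range ((p x : H →L[ℂ] H) : H →ₗ[ℂ] H)) = 1)
    (f : C(X, ℂ)) (T : H →L[ℂ] H) :
    (⨆ S : {S : H →L[ℂ] H // ‖S‖ ≤ 1}, ⨆ x : X,
        ‖f x * (LinearMap.trace ℂ H) ((((S : H →L[ℂ] H) ∘L p x) : H →L[ℂ] H) : H →ₗ[ℂ] H) -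
          (LinearMap.trace ℂ H) (((T ∘L (S : H →L[ℂ] H) ∘L p x) : H →L[ℂ] H) : H →ₗ[ℂ] H)‖)
      = ⨆ x : X, ‖(p x) ∘L (f x • (1 : H →L[ℂ] H) - T)‖ := by
  haveI : CompleteSpace H := FiniteDimensional.complete ℂ H
  set A : X → (H →L[ℂ] H) := fun x => f x • (1 : H →L[ℂ] H) - T with hA_def
  choose e he hpe using fun x => exists_unit_vec (p x) (hproj x).1 (hproj x).2.1 (hproj x).2.2
  set w : X → H := fun x => ContinuousLinearMap.adjoint (A x) (e x) with hw_def
  -- trace computations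
  have htr : ∀ (S : H →L[ℂ] H) (x : X),
      LinearMap.trace ℂ H (((S ∘L p x : H →L[ℂ] H)) : H →ₗ[ℂ] H) = ⟪e x, S (e x)⟫ := by
    intro S x
    have : ((S ∘L p x : H →L[ℂ] H) : H →ₗ[ℂ] H)
        = (((innerSL ℂ (e x)).smulRight (S (e x)) : H →L[ℂ] H) : H →ₗ[ℂ] H) := by
      ext v
      simp [hpe x v]
    rw [this, trace_rankOne']
  -- the value of the LHS body
  have hval : ∀ (S : H →L[ℂ] H) (x : X),
      f x * (LinearMap.trace ℂ H) (((S ∘L p x : H →L[ℂ] H)) : H →ₗ[ℂ] H) -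
        (LinearMap.trace ℂ H) (((T ∘L S ∘L p x : H →L[ℂ] H)) : H →ₗ[ℂ] H)
      = ⟪w x, S (e x)⟫ := by
    intro S x
    have h2 : (T ∘L S ∘L p x : H →L[ℂ] H) = (T ∘L S) ∘L p x := by rfl
    rw [htr S x, h2, htr (T ∘L S) x]
    have : f x * ⟪e x, S (e x)⟫ - ⟪e x, (T ∘L S) (e x)⟫ = ⟪e x, A x (S (e x))⟫ := by
      rw [hA_def]
      simp only [ContinuousLinearMap.comp_apply, ContinuousLinearMap.sub_apply,
        ContinuousLinearMap.smul_apply, ContinuousLinearMap.one_apply, inner_sub_right,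
        inner_smul_right]
    rw [this, hw_def]
    exact (ContinuousLinearMap.adjoint_inner_left (A x) (S (e x)) (e x)).symm
  -- norm of RHS body
  have hnorm : ∀ x : X, ‖(p x) ∘L A x‖ = ‖w x‖ := by
    intro x
    have : (p x) ∘L A x = (innerSL ℂ (w x)).smulRight (e x) := by
      ext v
      simp only [ContinuousLinearMap.comp_apply, ContinuousLinearMap.smulRight_apply,
        innerSL_apply_apply, hpe x]
      congr 1
      exact (ContinuousLinearMap.adjoint_inner_left (A x) v (e x)).symm
    rw [this, ContinuousLinearMap.norm_smulRight_apply, innerSL_apply_norm, he x, mul_one]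
  -- boundedness of x ↦ ‖w x‖
  have hwcont : Continuous fun x => ‖(p x) ∘L A x‖ := by
    apply Continuous.norm
    apply Continuous.clm_comp p.continuous
    exact (f.continuous.smul continuous_const).sub continuous_const
  have hbddw : BddAbove (Set.range fun x => ‖w x‖) := by
    have : (fun x => ‖w x‖) = fun x => ‖(p x) ∘L A x‖ := funext fun x => (hnorm x).symm
    rw [this]
    exact (isCompact_range hwcont).bddAbove
  -- pointwise bound
  have hub : ∀ (S : {S : H →L[ℂ] H // ‖S‖ ≤ 1}) (x : X), ‖⟪w x, (S : H →L[ℂ] H) (e x)⟫‖ ≤ ‖w x‖ := by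
    intro S x
    calc ‖⟪w x, (S : H →L[ℂ] H) (e x)⟫‖ ≤ ‖w x‖ * ‖(S : H →L[ℂ] H) (e x)‖ := norm_inner_le_norm _ _
      _ ≤ ‖w x‖ * (‖(S : H →L[ℂ] H)‖ * ‖e x‖) :=
          mul_le_mul_of_nonneg_left ((S : H →L[ℂ] H).le_opNorm (e x)) (norm_nonneg _)
      _ ≤ ‖w x‖ * (1 * 1) := by
          apply mul_le_mul_of_nonneg_left _ (norm_nonneg _)
          exact mul_le_mul S.2 (le_of_eq (he x)) (norm_nonneg _) zero_le_one
      _ = ‖w x‖ := by ring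
  -- rewrite both sides
  have lhs_eq : (⨆ S : {S : H →L[ℂ] H // ‖S‖ ≤ 1}, ⨆ x : X,
        ‖f x * (LinearMap.trace ℂ H) ((((S : H →L[ℂ] H) ∘L p x) : H →L[ℂ] H) : H →ₗ[ℂ] H) -
          (LinearMap.trace ℂ H) (((T ∘L (S : H →L[ℂ] H) ∘L p x) : H →L[ℂ] H) : H →ₗ[ℂ] H)‖)
      = ⨆ S : {S : H →L[ℂ] H // ‖S‖ ≤ 1}, ⨆ x : X, ‖⟪w x, (S : H →L[ℂ] H) (e x)⟫‖ := by
    refine iSup_congr fun S => iSup_congr fun x => ?_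
    rw [hval (S : H →L[ℂ] H) x]
  have rhs_eq : (⨆ x : X, ‖(p x) ∘L (f x • (1 : H →L[ℂ] H) - T)‖) = ⨆ x : X, ‖w x‖ :=
    iSup_congr fun x => hnorm x
  rw [lhs_eq, rhs_eq]
  -- boundedness of inner sups
  have hbddin : ∀ S : {S : H →L[ℂ] H // ‖S‖ ≤ 1},
      BddAbove (Set.range fun x => ‖⟪w x, (S : H →L[ℂ] H) (e x)⟫‖) := by
    intro S
    obtain ⟨C, hC⟩ := hbddw
    refine ⟨C, ?_⟩
    rintro r ⟨x, rfl⟩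
    exact (hub S x).trans (hC ⟨x, rfl⟩)
  have hgle : ∀ S : {S : H →L[ℂ] H // ‖S‖ ≤ 1},
      (⨆ x : X, ‖⟪w x, (S : H →L[ℂ] H) (e x)⟫‖) ≤ ⨆ x : X, ‖w x‖ :=
    fun S => ciSup_le fun x => (hub S x).trans (le_ciSup hbddw x)
  have hbddg : BddAbove (Set.range fun S : {S : H →L[ℂ] H // ‖S‖ ≤ 1} =>
      ⨆ x : X, ‖⟪w x, (S : H →L[ℂ] H) (e x)⟫‖) := by
    refine ⟨⨆ x : X, ‖w x‖, ?_⟩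
    rintro r ⟨S, rfl⟩
    exact hgle S
  haveI : Nonempty {S : H →L[ℂ] H // ‖S‖ ≤ 1} := ⟨⟨0, by simp⟩⟩
  apply le_antisymm
  · exact ciSup_le hgle
  · apply ciSup_le
    intro x
    by_cases hw0 : w x = 0
    · have : ‖w x‖ = 0 := by rw [hw0, norm_zero]
      rw [this]
      have h0 : (0 : ℝ) ≤ ⨆ x : X, ‖⟪w x, ((⟨0, by simp⟩ : {S : H →L[ℂ] H // ‖S‖ ≤ 1}) :
          H →L[ℂ] H) (e x)⟫‖ :=
        le_trans (norm_nonneg _) (le_ciSup (hbddin _) x)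
      exact h0.trans (le_ciSup hbddg _)
    · have hwn : ‖w x‖ ≠ 0 := norm_ne_zero_iff.mpr hw0
      set S₀ : H →L[ℂ] H := (innerSL ℂ (e x)).smulRight ((‖w x‖ : ℂ)⁻¹ • w x) with hS₀
      have hS₀norm : ‖S₀‖ ≤ 1 := by
        rw [hS₀, ContinuousLinearMap.norm_smulRight_apply, innerSL_apply_norm, he x, one_mul,
          norm_smul]
        simp only [norm_inv, Complex.norm_real, Real.norm_eq_abs, abs_norm]
        rw [inv_mul_cancel₀ hwn]
      have hcne : ((‖w x‖ : ℂ)) ≠ 0 := by exact_mod_cast hwn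
      have hSval : ‖⟪w x, S₀ (e x)⟫‖ = ‖w x‖ := by
        have hse : S₀ (e x) = (‖w x‖ : ℂ)⁻¹ • w x := by
          simp [hS₀, inner_self_eq_norm_sq_to_K, he x]
        rw [hse, inner_smul_right, inner_self_eq_norm_sq_to_K, norm_mul, norm_inv, norm_pow]
        simp only [Complex.norm_real, Real.norm_eq_abs, abs_norm]
        field_simp
        ring_nf
        simp
      calc ‖w x‖ = ‖⟪w x, ((⟨S₀, hS₀norm⟩ : {S : H →L[ℂ] H // ‖S‖ ≤ 1}) : H →L[ℂ] H) (e x)⟫‖ :=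
            hSval.symm
        _ ≤ ⨆ x' : X, ‖⟪w x', ((⟨S₀, hS₀norm⟩ : {S : H →L[ℂ] H // ‖S‖ ≤ 1}) :
              H →L[ℂ] H) (e x')⟫‖ := le_ciSup (hbddin _) x
        _ ≤ _ := le_ciSup hbddg _
end
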